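/- arXiv:1804.09457 — 9 statements merged into one kernel-verified Lean document; each statement's English description precedes it below -/
import Mathlib

section
/- Let K be a field, n ≥ 2, let T be a consistent diagonal n×n matrix over K, and let A be a traceless n×n matrix over K all of whose off-diagonal entries are nonzero. Then T and A generate the Lie algebra sl_n(K). -/
open Matrix

lemma extract_mem {K : Type} [Field K] {M : Type} [AddCommGroup M] [Module K M]
    (S : Submodule K M) {ι : Type} [Fintype ι] (lam : ι → K)
    (hinj : Function.Injective lam) (h0 : ∀ p, lam p ≠ 0) (u : ι → M)
    (hw : ∀ k : ℕ, (∑ p, lam p ^ (k + 1) • u p) ∈ S) (q : ι) : u q ∈ S := by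
  classical
  set m := Fintype.card ι with hm
  set e : Fin m ≃ ι := (Fintype.equivFin ι).symm with he
  set lam' : Fin m → K := lam ∘ e with hlam'
  set u' : Fin m → M := u ∘ e with hu'
  set V : Matrix (Fin m) (Fin m) K := Matrix.of fun p k => lam' p ^ ((k : ℕ) + 1) with hV
  have hVd : V = Matrix.diagonal lam' * Matrix.vandermonde lam' := by
    ext p k
    simp [hV, Matrix.diagonal_mul, Matrix.vandermonde, pow_succ']
  have hdet : IsUnit V.det := by
    rw [hVd, Matrix.det_mul, Matrix.det_diagonal]
    refine (mul_ne_zero ?_ ?_).isUnit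
    · exact Finset.prod_ne_zero_iff.2 fun p _ => h0 _
    · exact Matrix.det_vandermonde_ne_zero_iff.mpr (hinj.comp e.injective)
  have hVinv : V * V⁻¹ = 1 := Matrix.mul_nonsing_inv V hdet
  have hwk : ∀ k : Fin m, (∑ p : Fin m, V p k • u' p) ∈ S := by
    intro k
    have := hw (k : ℕ)
    have hsum : (∑ p : ι, lam p ^ ((k : ℕ) + 1) • u p)
        = ∑ p : Fin m, V p k • u' p := by
      refine (Fintype.sum_equiv e.symm _ _ fun p => ?_)
      simp [hV, hlam', hu']
    rw [hsum] at this
    exact this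
  have key : u' (e.symm q) = ∑ k : Fin m, V⁻¹ k (e.symm q) • ∑ p : Fin m, V p k • u' p := by
    set q' := e.symm q
    calc u' q' = ∑ p : Fin m, (V * V⁻¹) p q' • u' p := by
          rw [hVinv]
          simp [Matrix.one_apply]
      _ = ∑ p : Fin m, (∑ k, V p k * V⁻¹ k q') • u' p := by
          simp [Matrix.mul_apply]
      _ = ∑ p : Fin m, ∑ k, (V⁻¹ k q' * V p k) • u' p := by
          simp [Finset.sum_smul, mul_comm]
      _ = ∑ k, ∑ p : Fin m, (V⁻¹ k q' * V p k) • u' p := Finset.sum_comm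
      _ = ∑ k : Fin m, V⁻¹ k q' • ∑ p : Fin m, V p k • u' p := by
          simp [Finset.smul_sum, mul_smul]
  have : u' (e.symm q) ∈ S := by
    rw [key]
    exact Submodule.sum_mem _ fun k _ => Submodule.smul_mem _ _ (hwk k)
  simpa [hu'] using this

lemma diag_bracket {K : Type} [Field K] {n : ℕ} (α : Fin n → K)
    (X : Matrix (Fin n) (Fin n) K) (i j : Fin n) :
    ⁅Matrix.diagonal α, X⁆ i j = (α i - α j) * X i j := by
  simp only [Ring.lie_def, Matrix.sub_apply, Matrix.diagonal_mul, Matrix.mul_diagonal]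
  ring

/-- A tuple of elements of a field is consistent if it sums to zero, has nonzero pairwise
distinct entries, and all pairwise differences are distinct (except for the trivial
coincidences). -/
def IsConsistent {K : Type} [Field K] {n : ℕ} (α : Fin n → K) : Prop :=
  (∑ i, α i = 0) ∧
  (∀ i, α i ≠ 0) ∧
  (∀ i j, i ≠ j → α i ≠ α j) ∧
  (∀ i j k l : Fin n, α i - α j = α k - α l → (i = j ∧ k = l) ∨ (i = k ∧ j = l))

attribute [local instance 100] LieRing.ofAssociativeRing

/-- A consistent diagonal matrix `T` and a traceless matrix `A` with all off-diagonal
entries nonzero generate `sl_n(K)`. -/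
theorem stmt_1 {K : Type} [Field K] (n : ℕ) (hn : 2 ≤ n)
    (α : Fin n → K) (hα : IsConsistent α)
    (A : Matrix (Fin n) (Fin n) K) (htr : A.trace = 0)
    (hoff : ∀ i j, i ≠ j → A i j ≠ 0) :
    LieSubalgebra.lieSpan K (Matrix (Fin n) (Fin n) K) {Matrix.diagonal α, A} =
      LieAlgebra.SpecialLinear.sl (Fin n) K := by
  classical
  obtain ⟨hsum, hne, hdist, hdiff⟩ := hα
  set T := Matrix.diagonal α with hT0
  set S := LieSubalgebra.lieSpan K (Matrix (Fin n) (Fin n) K) {T, A} with hS0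
  have hT : T ∈ S := LieSubalgebra.subset_lieSpan (by simp)
  have hA : A ∈ S := LieSubalgebra.subset_lieSpan (by simp)
  -- iterated brackets
  have hMk : ∀ k : ℕ, (Matrix.of fun i j => (α i - α j) ^ (k + 1) * A i j) ∈ S := by
    intro k
    induction k with
    | zero =>
      have h : (Matrix.of fun i j => (α i - α j) ^ (0 + 1) * A i j) = ⁅T, A⁆ := by
        ext i j
        rw [hT0, diag_bracket]
        simp
      rw [h]
      exact S.lie_mem hT hA
    | succ k ih =>
      have h : (Matrix.of fun i j => (α i - α j) ^ (k + 1 + 1) * A i j)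
          = ⁅T, Matrix.of fun i j => (α i - α j) ^ (k + 1) * A i j⁆ := by
        ext i j
        rw [hT0, diag_bracket]
        simp only [Matrix.of_apply]
        ring
      rw [h]
      exact S.lie_mem hT ih
  -- the index type of off-diagonal pairs
  let ι := {p : Fin n × Fin n // p.1 ≠ p.2}
  let lam : ι → K := fun p => α p.1.1 - α p.1.2
  let u : ι → Matrix (Fin n) (Fin n) K :=
    fun p => A p.1.1 p.1.2 • Matrix.single p.1.1 p.1.2 1
  have hdecomp : ∀ k : ℕ,
      (∑ p : ι, lam p ^ (k + 1) • u p) = Matrix.of fun i j => (α i - α j) ^ (k + 1) * A i j := by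
    intro k
    have h1 : (∑ p : ι, lam p ^ (k + 1) • u p)
        = ∑ p ∈ (Finset.univ : Finset (Fin n)).offDiag,
            (α p.1 - α p.2) ^ (k + 1) • (A p.1 p.2 • Matrix.single p.1 p.2 1) := by
      exact (Finset.sum_subtype _ (fun x => by simp [Finset.mem_offDiag])
        (fun p : Fin n × Fin n =>
          (α p.1 - α p.2) ^ (k + 1) • (A p.1 p.2 • Matrix.single p.1 p.2 1))).symm
    rw [h1]
    rw [Finset.sum_subset (fun p _ => Finset.mem_product.2 ⟨Finset.mem_univ _, Finset.mem_univ _⟩)]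
    · rw [Finset.sum_product]
      conv_rhs => rw [matrix_eq_sum_single (Matrix.of fun i j => (α i - α j) ^ (k + 1) * A i j)]
      refine Finset.sum_congr rfl fun i _ => Finset.sum_congr rfl fun j _ => ?_
      rw [smul_smul, Matrix.smul_single, smul_eq_mul, mul_one, Matrix.of_apply]
    · intro p _ hp
      have : p.1 = p.2 := by
        by_contra h
        exact hp (by simp [Finset.mem_offDiag, h])
      rw [this, sub_self, zero_pow (Nat.succ_ne_zero k), zero_smul]
  -- elementary matrices are in S
  have hstd : ∀ i j : Fin n, i ≠ j → Matrix.single i j (1 : K) ∈ S := by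
    intro i j hij
    have hinj : Function.Injective lam := by
      intro p q h
      rcases hdiff _ _ _ _ h with ⟨h1, _⟩ | ⟨h1, h2⟩
      · exact absurd h1 p.2
      · exact Subtype.ext (Prod.ext h1 h2)
    have h0 : ∀ p : ι, lam p ≠ 0 := fun p => sub_ne_zero.mpr (hdist _ _ p.2)
    have hu : u ⟨(i, j), hij⟩ ∈ S := by
      refine extract_mem S.toSubmodule lam hinj h0 u (fun k => ?_) ⟨(i, j), hij⟩
      rw [hdecomp k]
      exact hMk k
    have : Matrix.single i j (1 : K) = (A i j)⁻¹ • u ⟨(i, j), hij⟩ := by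
      show _ = (A i j)⁻¹ • (A i j • _)
      rw [smul_smul, inv_mul_cancel₀ (hoff i j hij), one_smul]
    rw [this]
    exact S.smul_mem _ hu
  -- diagonal differences are in S
  have i0 : Fin n := ⟨0, by omega⟩
  have hdiagS : ∀ i : Fin n,
      Matrix.single i i (1 : K) - Matrix.single i0 i0 1 ∈ S := by
    intro i
    by_cases h : i = i0
    · rw [h, sub_self]
      exact S.zero_mem
    · have hb : Matrix.single i i (1 : K) - Matrix.single i0 i0 1
          = ⁅Matrix.single i i0 (1 : K), Matrix.single i0 i (1 : K)⁆ := by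
        rw [Ring.lie_def, Matrix.single_mul_single_same, Matrix.single_mul_single_same, one_mul]
      rw [hb]
      exact S.lie_mem (hstd i i0 h) (hstd i0 i (Ne.symm h))
  -- conclude
  apply le_antisymm
  · rw [LieSubalgebra.lieSpan_le]
    intro x hx
    rcases hx with hx | hx
    · subst hx
      show Matrix.trace (Matrix.diagonal α) = 0
      rw [Matrix.trace_diagonal]
      exact hsum
    · simp only [Set.mem_singleton_iff] at hx
      subst hx
      exact htr
  · intro x hx
    have htrx : Matrix.trace x = 0 := hx
    have hx2 : x = ∑ i, ∑ j, x i j •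
        (Matrix.single i j (1 : K) -
          if i = j then Matrix.single i0 i0 1 else 0) := by
      have h1 : ∑ i, ∑ j, x i j • Matrix.single i j (1 : K) = x := by
        conv_rhs => rw [matrix_eq_sum_single x]
        refine Finset.sum_congr rfl fun i _ => Finset.sum_congr rfl fun j _ => ?_
        rw [Matrix.smul_single, smul_eq_mul, mul_one]
      have h2 : ∑ i, ∑ j, x i j •
          (if i = j then Matrix.single i0 i0 (1 : K) else 0) = 0 := by
        have h3 : ∀ i : Fin n, (∑ j, x i j •
            (if i = j then Matrix.single i0 i0 (1 : K) else 0))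
            = x i i • Matrix.single i0 i0 1 := by
          intro i
          rw [Finset.sum_eq_single i]
          · rw [if_pos rfl]
          · intro j _ hji
            rw [if_neg (Ne.symm hji), smul_zero]
          · intro h
            exact absurd (Finset.mem_univ i) h
        simp only [h3]
        rw [← Finset.sum_smul]
        have h4 : ∑ i, x i i = Matrix.trace x := rfl
        rw [h4, htrx, zero_smul]
      simp only [smul_sub, Finset.sum_sub_distrib, h1, h2, sub_zero]
    rw [hx2]
    refine Submodule.sum_mem S.toSubmodule fun i _ =>
      Submodule.sum_mem S.toSubmodule fun j _ =>
        Submodule.smul_mem S.toSubmodule _ ?_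
    by_cases h : i = j
    · subst h
      rw [if_pos rfl]
      exact hdiagS i
    · rw [if_neg h, sub_zero]
      exact hstd i j h
end

section
/- Let K be a field, n ≥ 2, and let B be a fixed matrix in sl_n(K). Then there exists a family S of polynomials over K in the n² matrix-entry variables such that for every X ∈ sl_n(K): X and B generate sl_n(K) if and only if some polynomial in S evaluates to a nonzero value at the entries of X. In particular, the set of X ∈ sl_n(K) such that X and B generate sl_n(K) is open in the Zariski topology on sl_n(K). -/
attribute [local instance 100] LieRing.ofAssociativeRing

open Matrix

namespace SL5aux

/-- iterated bracket words in two elements of a Lie ring -/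
def wordEval {L : Type*} [LieRing L] (a b : L) : FreeMagma Bool → L
  | FreeMagma.of true => a
  | FreeMagma.of false => b
  | FreeMagma.mul x y => ⁅wordEval a b x, wordEval a b y⁆

lemma coe_lieSpan_pair (R L : Type*) [CommRing R] [LieRing L] [LieAlgebra R L] (a b : L) :
    (LieSubalgebra.lieSpan R L {a, b} : Submodule R L)
      = Submodule.span R (Set.range (wordEval a b)) := by
  apply le_antisymm
  · intro x hx
    refine LieSubalgebra.lieSpan_induction (R := R)
      (p := fun y _ => y ∈ Submodule.span R (Set.range (wordEval a b))) ?_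
      (Submodule.zero_mem _)
      (fun x y _ _ hx hy => Submodule.add_mem _ hx hy)
      (fun r _ _ hx => Submodule.smul_mem _ r hx) ?_ hx
    · rintro x (rfl | rfl)
      · exact Submodule.subset_span ⟨FreeMagma.of true, rfl⟩
      · exact Submodule.subset_span ⟨FreeMagma.of false, rfl⟩
    · rintro x y - - hx hy
      induction hx, hy using Submodule.span_induction₂ with
      | mem_mem u v hu hv =>
          obtain ⟨wu, rfl⟩ := hu
          obtain ⟨wv, rfl⟩ := hv
          exact Submodule.subset_span ⟨FreeMagma.mul wu wv, rfl⟩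
      | zero_left v hv => simp
      | zero_right u hu => simp
      | add_left u v w hu hv hw h1 h2 => rw [add_lie]; exact Submodule.add_mem _ h1 h2
      | add_right u v w hu hv hw h1 h2 => rw [lie_add]; exact Submodule.add_mem _ h1 h2
      | smul_left r u v hu hv h => rw [smul_lie]; exact Submodule.smul_mem _ r h
      | smul_right r u v hu hv h => rw [lie_smul]; exact Submodule.smul_mem _ r h
  · rw [Submodule.span_le]
    rintro _ ⟨w, rfl⟩
    induction w with
    | ih1 x =>
        cases x
        · exact LieSubalgebra.subset_lieSpan (Set.mem_insert_iff.mpr (Or.inr rfl))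
        · exact LieSubalgebra.subset_lieSpan (Set.mem_insert _ _)
    | ih2 x y hx hy => exact (LieSubalgebra.lieSpan R L {a, b}).lie_mem hx hy

end SL5aux

section LinAlg

variable {K V : Type*} [Field K] [AddCommGroup V] [Module K V] [FiniteDimensional K V]

/-- From a family whose span has rank at least `m`, extract `m` linearly
independent members. -/
lemma exists_subfamily_linearIndependent {ι : Type*} (v : ι → V) {m : ℕ}
    (h : m ≤ Module.finrank K (Submodule.span K (Set.range v))) :
    ∃ f : Fin m → ι, LinearIndependent K (v ∘ f) := by
  obtain ⟨b, hbs, hspan, hli⟩ := exists_linearIndependent K (Set.range v)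
  have hbfin : b.Finite := hli.setFinite
  haveI : Fintype b := hbfin.fintype
  have hcard : Module.finrank K (Submodule.span K b) = b.toFinset.card :=
    finrank_span_set_eq_card hli
  have hm : m ≤ Fintype.card b := by
    rw [Set.toFinset_card] at hcard
    rw [← hcard, hspan]
    exact h
  let e : Fin m → b := fun i => (Fintype.equivFin b).symm (Fin.castLE hm i)
  have he : Function.Injective e := fun i j hij => by
    have := (Fintype.equivFin b).symm.injective hij
    exact Fin.castLE_injective hm this
  choose f hf using fun i => hbs (e i).2
  refine ⟨f, ?_⟩
  have : v ∘ f = Subtype.val ∘ e := funext fun i => hf i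
  rw [this]
  exact hli.comp e he

end LinAlg

lemma linearIndependent_iff_exists_det_ne_zero {K : Type*} [Field K] {ι : Type*} [Fintype ι]
    {m : ℕ} (v : Fin m → (ι → K)) :
    LinearIndependent K v ↔
      ∃ g : Fin m → ι, (Matrix.of fun i j => v i (g j)).det ≠ 0 := by
  constructor
  · intro hv
    set M : Matrix (Fin m) ι K := Matrix.of v with hM
    have hrank : M.rank = m := by
      have : LinearIndependent K (fun i => M i) := hv
      simpa using this.rank_matrix
    have hrankT : Mᵀ.rank = m := by rw [Matrix.rank_transpose, hrank]
    have hspan : m ≤ Module.finrank K (Submodule.span K (Set.range Mᵀ)) := by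
      rw [show Set.range Mᵀ = Set.range Mᵀ.row from rfl, ← Matrix.rank_eq_finrank_span_row Mᵀ, hrankT]
    obtain ⟨g, hg⟩ := exists_subfamily_linearIndependent (Mᵀ : _) hspan
    refine ⟨g, ?_⟩
    set A : Matrix (Fin m) (Fin m) K := Matrix.of fun i j => v i (g j) with hA
    have hcols : LinearIndependent K (fun j => Aᵀ j) := hg
    have := Matrix.linearIndependent_cols_iff_isUnit.mp hcols
    rw [Matrix.isUnit_iff_isUnit_det, isUnit_iff_ne_zero] at this
    exact this
  · rintro ⟨g, hg⟩
    set A : Matrix (Fin m) (Fin m) K := Matrix.of fun i j => v i (g j) with hA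
    have : IsUnit A := by
      rw [Matrix.isUnit_iff_isUnit_det, isUnit_iff_ne_zero]; exact hg
    have hrows : LinearIndependent K (fun i => A i) :=
      Matrix.linearIndependent_rows_iff_isUnit.mpr this
    have : (fun i => A i) = (LinearMap.funLeft K K g) ∘ v := by
      funext i; ext j; rfl
    rw [this] at hrows
    exact LinearIndependent.of_comp _ hrows

lemma map_wordEval {R S : Type*} [CommRing R] [CommRing S] (f : R →+* S)
    {n : Type*} [Fintype n] [DecidableEq n]
    (a b : Matrix n n R) (w : FreeMagma Bool) :
    (SL5aux.wordEval a b w).map f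
      = SL5aux.wordEval (a.map f) (b.map f) w := by
  induction w with
  | ih1 x => cases x <;> rfl
  | ih2 x y hx hy =>
    show (⁅SL5aux.wordEval a b x, SL5aux.wordEval a b y⁆ : Matrix n n R).map f = ⁅_, _⁆
    simp only [Ring.lie_def, ← RingHom.mapMatrix_apply, map_sub, _root_.map_mul]
    simp only [RingHom.mapMatrix_apply, hx, hy]


/-- For a fixed `B ∈ sl_n(K)`, there is a family `S` of polynomials in the `n²` matrix
entries such that a traceless matrix `X` generates `sl_n(K)` together with `B` iff some
polynomial in `S` is nonzero at the entries of `X`; in particular this set of `X` is a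
union of nonvanishing loci of polynomials, hence Zariski open in `sl_n(K)`. -/
theorem stmt_5 {K : Type} [Field K] (n : ℕ) (hn : 2 ≤ n)
    (B : Matrix (Fin n) (Fin n) K) (hB : B ∈ LieAlgebra.SpecialLinear.sl (Fin n) K) :
    ∃ S : Set (MvPolynomial (Fin n × Fin n) K),
      ∀ X : Matrix (Fin n) (Fin n) K, X ∈ LieAlgebra.SpecialLinear.sl (Fin n) K →
        ((LieSubalgebra.lieSpan K (Matrix (Fin n) (Fin n) K) {X, B} =
            LieAlgebra.SpecialLinear.sl (Fin n) K) ↔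
          ∃ p ∈ S, MvPolynomial.eval (fun q : Fin n × Fin n => X q.1 q.2) p ≠ 0) := by
  classical
  set sl := LieAlgebra.SpecialLinear.sl (Fin n) K with hsl
  set m := Module.finrank K (sl : Submodule K (Matrix (Fin n) (Fin n) K)) with hmm
  set P : Matrix (Fin n) (Fin n) (MvPolynomial (Fin n × Fin n) K) :=
    Matrix.of fun i j => MvPolynomial.X (i, j) with hP
  set Bc : Matrix (Fin n) (Fin n) (MvPolynomial (Fin n × Fin n) K) :=
    B.map MvPolynomial.C with hBc
  refine ⟨{ p | ∃ (f : Fin m → FreeMagma Bool) (g : Fin m → Fin n × Fin n),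
      p = (Matrix.of fun i j => SL5aux.wordEval P Bc (f i) (g j).1 (g j).2).det }, ?_⟩
  intro X hX
  set φ := (MvPolynomial.eval fun q : Fin n × Fin n => X q.1 q.2 :
      MvPolynomial (Fin n × Fin n) K →+* K) with hφ
  have hmapP : P.map φ = X := by ext i j; simp [hP, hφ, Matrix.map_apply]
  have hmapB : Bc.map φ = B := by ext i j; simp [hBc, hφ, Matrix.map_apply]
  have hword : ∀ w, (SL5aux.wordEval P Bc w).map φ = SL5aux.wordEval X B w := by
    intro w; rw [map_wordEval, hmapP, hmapB]
  have hle : LieSubalgebra.lieSpan K (Matrix (Fin n) (Fin n) K) {X, B} ≤ sl :=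
    LieSubalgebra.lieSpan_le.mpr (by rintro y (rfl | rfl); exacts [hX, hB])
  have hspanle : Submodule.span K (Set.range (SL5aux.wordEval X B)) ≤
      (sl : Submodule K (Matrix (Fin n) (Fin n) K)) := by
    rw [← SL5aux.coe_lieSpan_pair]
    exact fun x hx => hle hx
  -- Step 1: generation iff a linearly independent subfamily of words of size m exists
  have step1 : (LieSubalgebra.lieSpan K (Matrix (Fin n) (Fin n) K) {X, B} = sl) ↔
      ∃ f : Fin m → FreeMagma Bool, LinearIndependent K (SL5aux.wordEval X B ∘ f) := by
    constructor
    · intro h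
      have hspan : Submodule.span K (Set.range (SL5aux.wordEval X B)) =
          (sl : Submodule K (Matrix (Fin n) (Fin n) K)) := by
        rw [← SL5aux.coe_lieSpan_pair, h]
      exact exists_subfamily_linearIndependent _ (by rw [hspan])
    · rintro ⟨f, hf⟩
      have h1 : m ≤ Module.finrank K
          (Submodule.span K (Set.range (SL5aux.wordEval X B))) := by
        have hc : Module.finrank K
            (Submodule.span K (Set.range (SL5aux.wordEval X B ∘ f))) = m := by
          rw [finrank_span_eq_card hf, Fintype.card_fin]
        calc m = _ := hc.symm
          _ ≤ _ := Submodule.finrank_mono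
              (Submodule.span_mono (Set.range_comp_subset_range f (SL5aux.wordEval X B)))
      have heq : Submodule.span K (Set.range (SL5aux.wordEval X B)) =
          (sl : Submodule K (Matrix (Fin n) (Fin n) K)) :=
        Submodule.eq_of_le_of_finrank_le hspanle h1
      apply LieSubalgebra.toSubmodule_injective
      rw [SL5aux.coe_lieSpan_pair, heq]
  -- Step 2: linear independence iff some minor-determinant is nonzero
  let ψ : Matrix (Fin n) (Fin n) K ≃ₗ[K] (Fin n × Fin n → K) :=
    (LinearEquiv.curry K K (Fin n) (Fin n)).symm
  have step2 : ∀ f : Fin m → FreeMagma Bool,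
      LinearIndependent K (SL5aux.wordEval X B ∘ f) ↔
        ∃ g : Fin m → Fin n × Fin n,
          (Matrix.of fun i j => SL5aux.wordEval X B (f i) (g j).1 (g j).2).det ≠ 0 := by
    intro f
    refine Iff.trans
      (LinearMap.linearIndependent_iff ψ.toLinearMap (LinearEquiv.ker ψ)
        (v := SL5aux.wordEval X B ∘ f)).symm ?_
    exact linearIndependent_iff_exists_det_ne_zero
      (fun i => ψ (SL5aux.wordEval X B (f i)))
  -- Step 3: determinants of evaluated words are evaluations of the polynomials
  have step3 : ∀ (f : Fin m → FreeMagma Bool) (g : Fin m → Fin n × Fin n),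
      φ ((Matrix.of fun i j => SL5aux.wordEval P Bc (f i) (g j).1 (g j).2).det)
        = (Matrix.of fun i j => SL5aux.wordEval X B (f i) (g j).1 (g j).2).det := by
    intro f g
    rw [RingHom.map_det]
    congr 1
    ext i j
    have := congrFun (congrFun (hword (f i)) (g j).1) (g j).2
    simpa [Matrix.map_apply] using this
  rw [step1]
  constructor
  · rintro ⟨f, hf⟩
    obtain ⟨g, hg⟩ := (step2 f).mp hf
    exact ⟨_, ⟨f, g, rfl⟩, by rw [show (MvPolynomial.eval _ : _ → K) = ⇑φ from rfl, step3 f g]; exact hg⟩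
  · rintro ⟨p, ⟨f, g, rfl⟩, hp⟩
    refine ⟨f, (step2 f).mpr ⟨g, ?_⟩⟩
    rw [← step3 f g]
    exact hp
end

section
/- Let K be a field, n ≥ 2, and let B, X_0 ∈ sl_n(K) be such that X_0 and B generate sl_n(K). Then there exists a polynomial F over K in the n² matrix-entry variables such that F evaluated at the entries of X_0 is nonzero, and for every X ∈ sl_n(K), if F evaluated at the entries of X is nonzero then X and B generate sl_n(K). -/
attribute [local instance 100] LieRing.ofAssociativeRing

namespace Stmt6Aux
open Matrix

variable {K : Type} [Field K]

/-- Abstract bracket words in two letters. -/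
inductive BWord : Type
  | X : BWord
  | B : BWord
  | br : BWord → BWord → BWord

variable {m : Type} [Fintype m] [DecidableEq m]

/-- Evaluate a bracket word on a pair of matrices. -/
def wEval {R : Type} [CommRing R] (A C : Matrix m m R) : BWord → Matrix m m R
  | .X => A
  | .B => C
  | .br u v => ⁅wEval A C u, wEval A C v⁆

lemma wEval_map {R S : Type} [CommRing R] [CommRing S] (f : R →+* S)
    (A C : Matrix m m R) (w : BWord) :
    (wEval A C w).map f = wEval (A.map f) (C.map f) w := by
  induction w with
  | X => rfl
  | B => rfl
  | br u v hu hv =>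
      show f.mapMatrix (wEval A C (.br u v)) = _
      rw [show wEval A C (.br u v) = ⁅wEval A C u, wEval A C v⁆ from rfl,
        Ring.lie_def, map_sub, _root_.map_mul, _root_.map_mul]
      simp only [RingHom.mapMatrix_apply, hu, hv]
      rw [show wEval (A.map f) (C.map f) (.br u v)
        = ⁅wEval (A.map f) (C.map f) u, wEval (A.map f) (C.map f) v⁆ from rfl, Ring.lie_def]

lemma wEval_mem {L : LieSubalgebra K (Matrix m m K)} {A C : Matrix m m K}
    (hA : A ∈ L) (hC : C ∈ L) (w : BWord) : wEval A C w ∈ L := by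
  induction w with
  | X => exact hA
  | B => exact hC
  | br u v hu hv => exact L.lie_mem hu hv

/-- The span of all bracket words as a Lie subalgebra. -/
def wordSpan (A C : Matrix m m K) : LieSubalgebra K (Matrix m m K) :=
  { Submodule.span K (Set.range (wEval A C)) with
    lie_mem' := by
      intro x y hx hy
      refine Submodule.span_induction₂
        (p := fun x y _ _ => ⁅x, y⁆ ∈ Submodule.span K (Set.range (wEval A C)))
        ?_ ?_ ?_ ?_ ?_ ?_ ?_ hx hy
      · rintro _ _ ⟨u, rfl⟩ ⟨v, rfl⟩
        exact Submodule.subset_span ⟨.br u v, rfl⟩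
      · intro y _; simp
      · intro x _; simp
      · intro a b c _ _ _ h1 h2; rw [add_lie]; exact Submodule.add_mem _ h1 h2
      · intro a b c _ _ _ h1 h2; rw [lie_add]; exact Submodule.add_mem _ h1 h2
      · intro r a b _ _ h1; rw [smul_lie]; exact Submodule.smul_mem _ _ h1
      · intro r a b _ _ h1; rw [lie_smul]; exact Submodule.smul_mem _ _ h1 }

lemma wordSpan_coe (A C : Matrix m m K) :
    (wordSpan A C : Submodule K (Matrix m m K)) = Submodule.span K (Set.range (wEval A C)) := rfl

/-- Flattening a matrix into a vector, as a linear map. -/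
def flatten : Matrix m m K →ₗ[K] (m × m → K) where
  toFun M q := M q.1 q.2
  map_add' := fun _ _ => rfl
  map_smul' := fun _ _ => rfl

lemma flatten_injective : Function.Injective (flatten (K := K) (m := m)) := by
  intro A B h
  ext i j
  exact congrFun h (i, j)

/-- If `v` is a linearly independent family of vectors in `α → K` then some square selection
of coordinates has nonzero determinant. -/
lemma exists_det_ne_zero {ι α : Type} [Fintype ι] [DecidableEq ι] [Fintype α] [DecidableEq α]
    {v : ι → α → K} (hv : LinearIndependent K v) :
    ∃ φ : ι → α, (Matrix.of fun i j : ι => v i (φ j)).det ≠ 0 := by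
  classical
  set M : Matrix ι α K := Matrix.of v with hM
  have hinj : LinearMap.ker M.vecMulLinear = ⊥ := by
    rw [LinearMap.ker_eq_bot, Matrix.coe_vecMulLinear]
    exact Matrix.vecMul_injective_iff.2 hv
  obtain ⟨g, hg⟩ := M.vecMulLinear.exists_leftInverse_of_injective hinj
  set N : Matrix α ι K := (LinearMap.toMatrix' g)ᵀ with hN
  have hMN : M * N = 1 := by
    have hx : ∀ x : ι → K, x ᵥ* (M * N) = x := by
      intro x
      rw [← Matrix.vecMul_vecMul, hN, Matrix.vecMul_transpose, ← Matrix.toLin'_apply,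
        Matrix.toLin'_toMatrix']
      have : g (x ᵥ* M) = g (M.vecMulLinear x) := by rw [Matrix.vecMulLinear_apply]
      rw [this, ← LinearMap.comp_apply, hg, LinearMap.id_apply]
    ext i j
    have h1 := congrFun (hx (Pi.single i 1)) j
    rw [Matrix.single_vecMul] at h1
    rw [one_smul, Matrix.row_apply] at h1
    rw [h1, Matrix.one_apply, Pi.single_apply]
    simp [eq_comm]
  have h1 : ((M * N)ᵀ).det = 1 := by rw [hMN, Matrix.transpose_one, Matrix.det_one]
  have hrow : (M * N)ᵀ = fun i : ι => ∑ a : α, N a i • Mᵀ a := by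
    ext i j
    simp [Matrix.mul_apply, Matrix.transpose_apply, mul_comm, Finset.sum_apply]
  have h2 : (Matrix.detRowAlternating ((M * N)ᵀ) : K) = 1 := h1
  rw [hrow] at h2
  have h3 := MultilinearMap.map_sum
    (Matrix.detRowAlternating (R := K) (n := ι)).toMultilinearMap
    (fun (i : ι) (a : α) => N a i • Mᵀ a)
  rw [AlternatingMap.coe_multilinearMap] at h3
  rw [h3] at h2
  obtain ⟨φ, -, hφ⟩ := Finset.exists_ne_zero_of_sum_ne_zero (h2 ▸ one_ne_zero)
  refine ⟨φ, ?_⟩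
  have hsm := MultilinearMap.map_smul_univ
    (Matrix.detRowAlternating (R := K) (n := ι)).toMultilinearMap
    (fun i => N (φ i) i) (fun i => Mᵀ (φ i))
  rw [AlternatingMap.coe_multilinearMap] at hsm
  have h4 : Matrix.detRowAlternating (fun i : ι => Mᵀ (φ i)) ≠ 0 := by
    intro h
    apply hφ
    rw [show (fun i => N (φ i) i • Mᵀ (φ i)) = fun i => (fun i => N (φ i) i) i • (fun i : ι => Mᵀ (φ i)) i from rfl]
    rw [hsm, h, smul_zero]
  have h5 : (Matrix.of fun i j : ι => v i (φ j)) = (Matrix.of fun i j : ι => Mᵀ (φ i) j)ᵀ := by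
    ext i j; rfl
  rw [h5, Matrix.det_transpose]
  exact h4

/-- Converse: if some coordinate selection has nonzero determinant then the family is
linearly independent. -/
lemma linearIndependent_of_det_ne_zero {ι α : Type} [Fintype ι] [DecidableEq ι]
    {v : ι → α → K} (φ : ι → α)
    (h : (Matrix.of fun i j : ι => v i (φ j)).det ≠ 0) : LinearIndependent K v := by
  have hunit : IsUnit (Matrix.of fun i j : ι => v i (φ j)) :=
    (Matrix.isUnit_iff_isUnit_det _).2 (isUnit_iff_ne_zero.2 h)
  have h2 : LinearIndependent K (fun i => (Matrix.of fun i j : ι => v i (φ j)) i) :=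
    Matrix.vecMul_injective_iff.1 (Matrix.vecMul_injective_iff_isUnit.2 hunit)
  exact LinearIndependent.of_comp (LinearMap.funLeft K K φ) h2

end Stmt6Aux
/-- If `X₀` and `B` generate `sl_n(K)`, then there is a polynomial `F` in the `n²` matrix
entries which is nonzero at the entries of `X₀` and such that any traceless `X` at whose
entries `F` is nonzero also generates `sl_n(K)` together with `B`. -/
theorem stmt_6 {K : Type} [Field K] (n : ℕ) (hn : 2 ≤ n)
    (B X₀ : Matrix (Fin n) (Fin n) K)
    (hB : B ∈ LieAlgebra.SpecialLinear.sl (Fin n) K)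
    (hX₀ : X₀ ∈ LieAlgebra.SpecialLinear.sl (Fin n) K)
    (hgen : LieSubalgebra.lieSpan K (Matrix (Fin n) (Fin n) K) {X₀, B} =
      LieAlgebra.SpecialLinear.sl (Fin n) K) :
    ∃ F : MvPolynomial (Fin n × Fin n) K,
      MvPolynomial.eval (fun q : Fin n × Fin n => X₀ q.1 q.2) F ≠ 0 ∧
      ∀ X : Matrix (Fin n) (Fin n) K, X ∈ LieAlgebra.SpecialLinear.sl (Fin n) K →
        MvPolynomial.eval (fun q : Fin n × Fin n => X q.1 q.2) F ≠ 0 →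
        LieSubalgebra.lieSpan K (Matrix (Fin n) (Fin n) K) {X, B} =
          LieAlgebra.SpecialLinear.sl (Fin n) K := by
  classical
  set sl := LieAlgebra.SpecialLinear.sl (Fin n) K with hsldef
  set S : Set (Matrix (Fin n) (Fin n) K) := Set.range (Stmt6Aux.wEval X₀ B) with hSdef
  -- the span of all bracket words at `X₀` is exactly `sl`
  have hSsl : S ⊆ (sl : Set (Matrix (Fin n) (Fin n) K)) := by
    rintro _ ⟨w, rfl⟩; exact Stmt6Aux.wEval_mem hX₀ hB w
  have hle1 : (sl : Submodule K (Matrix (Fin n) (Fin n) K)) ≤ Submodule.span K S := by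
    have h1 : LieSubalgebra.lieSpan K (Matrix (Fin n) (Fin n) K) {X₀, B}
        ≤ Stmt6Aux.wordSpan X₀ B := by
      rw [LieSubalgebra.lieSpan_le]
      rintro x (rfl | rfl)
      · exact Submodule.subset_span ⟨.X, rfl⟩
      · exact Submodule.subset_span ⟨.B, rfl⟩
    rw [← hgen]
    exact (LieSubalgebra.toSubmodule_le_toSubmodule _ _).2 h1
  have hspanS : Submodule.span K S = (sl : Submodule K (Matrix (Fin n) (Fin n) K)) :=
    le_antisymm (Submodule.span_le.2 hSsl) hle1
  -- a finite linearly independent subfamily spanning `sl`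
  obtain ⟨t, hts, htspan, htind⟩ := exists_linearIndependent K S
  have htfin : t.Finite := htind.setFinite
  haveI : Fintype t := htfin.fintype
  have hw : ∀ x : t, ∃ w : Stmt6Aux.BWord, Stmt6Aux.wEval X₀ B w = (x : Matrix (Fin n) (Fin n) K) :=
    fun x => hts x.2
  choose w hwv using hw
  -- select coordinates with nonzero determinant at X₀
  have huind : LinearIndependent K
      (fun i : t => Stmt6Aux.flatten ((i : Matrix (Fin n) (Fin n) K))) := by
    have := htind.map' Stmt6Aux.flatten (LinearMap.ker_eq_bot.2 Stmt6Aux.flatten_injective)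
    exact this
  obtain ⟨φ, hφ⟩ := Stmt6Aux.exists_det_ne_zero huind
  -- the dimension count
  have hcard : Module.finrank K (sl : Submodule K (Matrix (Fin n) (Fin n) K)) = Fintype.card t := by
    rw [← hspanS, ← htspan, finrank_span_set_eq_card htind, Set.toFinset_card]
  -- the polynomial
  set R := MvPolynomial (Fin n × Fin n) K with hRdef
  set Xg : Matrix (Fin n) (Fin n) R := Matrix.of fun a b => MvPolynomial.X (a, b) with hXg
  set Bg : Matrix (Fin n) (Fin n) R := B.map MvPolynomial.C with hBg
  set F : R :=
    (Matrix.of fun i j : t => (Stmt6Aux.wEval Xg Bg (w i)) (φ j).1 (φ j).2).det with hF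
  have heval : ∀ X : Matrix (Fin n) (Fin n) K,
      MvPolynomial.eval (fun q : Fin n × Fin n => X q.1 q.2) F
        = (Matrix.of fun i j : t => (Stmt6Aux.wEval X B (w i)) (φ j).1 (φ j).2).det := by
    intro X
    rw [hF, RingHom.map_det]
    congr 1
    ext i j
    have hmap : (Stmt6Aux.wEval Xg Bg (w i)).map
        (MvPolynomial.eval (fun q : Fin n × Fin n => X q.1 q.2))
        = Stmt6Aux.wEval X B (w i) := by
      rw [Stmt6Aux.wEval_map]
      have h1 : Xg.map (MvPolynomial.eval (fun q : Fin n × Fin n => X q.1 q.2)) = X := by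
        ext a b; simp [hXg]
      have h2 : Bg.map (MvPolynomial.eval (fun q : Fin n × Fin n => X q.1 q.2)) = B := by
        ext a b; simp [hBg]
      rw [h1, h2]
    calc ((Matrix.of fun i j : t => (Stmt6Aux.wEval Xg Bg (w i)) (φ j).1 (φ j).2).map
          (MvPolynomial.eval (fun q : Fin n × Fin n => X q.1 q.2))) i j
        = ((Stmt6Aux.wEval Xg Bg (w i)).map
            (MvPolynomial.eval (fun q : Fin n × Fin n => X q.1 q.2))) (φ j).1 (φ j).2 := rfl
      _ = (Stmt6Aux.wEval X B (w i)) (φ j).1 (φ j).2 := by rw [hmap]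
  refine ⟨F, ?_, ?_⟩
  · rw [heval X₀]
    have : (Matrix.of fun i j : t => (Stmt6Aux.wEval X₀ B (w i)) (φ j).1 (φ j).2)
        = Matrix.of fun i j : t =>
            (Stmt6Aux.flatten ((i : Matrix (Fin n) (Fin n) K))) (φ j) := by
      ext i j
      simp only [Matrix.of_apply, hwv]
      rfl
    rw [this]
    exact hφ
  · intro X hX hFX
    rw [heval X] at hFX
    -- words at X are linearly independent
    set vX : t → Matrix (Fin n) (Fin n) K := fun i => Stmt6Aux.wEval X B (w i) with hvX
    have hvind : LinearIndependent K vX := by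
      have h1 : LinearIndependent K (fun i : t => Stmt6Aux.flatten (vX i)) := by
        apply Stmt6Aux.linearIndependent_of_det_ne_zero (v := fun i => Stmt6Aux.flatten (vX i)) φ
        exact hFX
      exact LinearIndependent.of_comp Stmt6Aux.flatten h1
    -- their span is all of sl
    have hvsl : Submodule.span K (Set.range vX) ≤ (sl : Submodule K _) := by
      rw [Submodule.span_le]
      rintro _ ⟨i, rfl⟩
      exact Stmt6Aux.wEval_mem hX hB (w i)
    have hveq : Submodule.span K (Set.range vX) = (sl : Submodule K _) := by
      apply Submodule.eq_of_le_of_finrank_le hvsl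
      rw [hcard, finrank_span_eq_card hvind]
    -- conclude
    apply le_antisymm
    · rw [LieSubalgebra.lieSpan_le]
      rintro x (rfl | rfl)
      · exact hX
      · exact hB
    · rw [← LieSubalgebra.toSubmodule_le_toSubmodule _ _, ← hveq, Submodule.span_le]
      rintro _ ⟨i, rfl⟩
      have hXmem : X ∈ LieSubalgebra.lieSpan K (Matrix (Fin n) (Fin n) K) {X, B} :=
        LieSubalgebra.subset_lieSpan (Set.mem_insert _ _)
      have hBmem : B ∈ LieSubalgebra.lieSpan K (Matrix (Fin n) (Fin n) K) {X, B} :=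
        LieSubalgebra.subset_lieSpan (Set.mem_insert_of_mem _ rfl)
      exact Stmt6Aux.wEval_mem hXmem hBmem (w i)
end

section
/- Let n ≥ 3 be an odd integer. Then the n distinct complex n-th roots of unity, listed in any order as a tuple (ζ_1,…,ζ_n), form a consistent tuple of complex numbers. -/
lemma conj_eq_inv_of_root {n : ℕ} (hn : n ≠ 0) {z : ℂ} (hz : z ^ n = 1) :
    (starRingEnd ℂ) z = z⁻¹ := by
  have h1 : ‖z‖ = 1 := Complex.norm_eq_one_of_pow_eq_one hz hn
  have h2 : z * (starRingEnd ℂ) z = 1 := by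
    rw [Complex.mul_conj, Complex.normSq_eq_norm_sq, h1]
    norm_num
  exact eq_inv_of_mul_eq_one_right (by linear_combination h2)

/-- For odd `n ≥ 3`, any enumeration of the `n` distinct complex `n`-th roots of unity
is a consistent tuple. -/
theorem stmt_10 (n : ℕ) (hn : 3 ≤ n) (hodd : Odd n) (ζ : Fin n → ℂ)
    (hroot : ∀ i, ζ i ^ n = 1) (hinj : Function.Injective ζ) :
    IsConsistent ζ := by
  have hn0 : n ≠ 0 := by omega
  have hnpos : 0 < n := by omega
  have hne : ∀ i, ζ i ≠ 0 := by
    intro i h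
    have := hroot i
    rw [h, zero_pow hn0] at this
    exact one_ne_zero this.symm
  refine ⟨?_, hne, fun i j hij h => hij (hinj h), ?_⟩
  · -- sum is zero
    obtain ⟨ξ, hξ⟩ : ∃ ξ : ℂ, IsPrimitiveRoot ξ n :=
      ⟨_, Complex.isPrimitiveRoot_exp n hn0⟩
    have hcard : (Polynomial.nthRootsFinset n (1 : ℂ)).card = n := hξ.card_nthRootsFinset
    have himg : Finset.univ.image ζ = Polynomial.nthRootsFinset n (1 : ℂ) := by
      apply Finset.eq_of_subset_of_card_le
      · intro x hx
        simp only [Finset.mem_image] at hx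
        obtain ⟨i, -, rfl⟩ := hx
        exact (Polynomial.mem_nthRootsFinset hnpos (1 : ℂ)).mpr (hroot i)
      · rw [hcard, Finset.card_image_of_injective _ hinj, Finset.card_univ, Fintype.card_fin]
    have himg' : (Finset.range n).image (ξ ^ ·) = Polynomial.nthRootsFinset n (1 : ℂ) := by
      apply Finset.eq_of_subset_of_card_le
      · intro x hx
        simp only [Finset.mem_image] at hx
        obtain ⟨i, -, rfl⟩ := hx
        refine (Polynomial.mem_nthRootsFinset hnpos (1 : ℂ)).mpr ?_
        show (ξ ^ i) ^ n = 1
        rw [← pow_mul, mul_comm, pow_mul, hξ.pow_eq_one, one_pow]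
      · rw [hcard, Finset.card_image_of_injOn, Finset.card_range]
        intro a ha b hb hab
        exact hξ.pow_inj (Finset.mem_range.mp ha) (Finset.mem_range.mp hb) hab
    have h1 : ∑ i, ζ i = ∑ x ∈ Polynomial.nthRootsFinset n (1 : ℂ), x := by
      rw [← himg, Finset.sum_image (fun a _ b _ h => hinj h)]
    have h2 : ∑ i ∈ Finset.range n, ξ ^ i = ∑ x ∈ Polynomial.nthRootsFinset n (1 : ℂ), x := by
      rw [← himg', Finset.sum_image
        (fun a ha b hb h => hξ.pow_inj (Finset.mem_range.mp ha) (Finset.mem_range.mp hb) h)]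
    rw [h1, ← h2, hξ.geom_sum_eq_zero (by omega)]
  · -- difference condition
    intro i j k l h
    have hsum : ζ i + ζ l = ζ k + ζ j := by linear_combination h
    by_cases hs : ζ i + ζ l = 0
    · exfalso
      have h1 : ζ l = -ζ i := by linear_combination hs
      have h2 := hroot l
      rw [h1, hodd.neg_pow, hroot i] at h2
      norm_num at h2
    · have hconj : (ζ i)⁻¹ + (ζ l)⁻¹ = (ζ k)⁻¹ + (ζ j)⁻¹ := by
        have := congrArg (starRingEnd ℂ) hsum
        simpa only [map_add, conj_eq_inv_of_root hn0 (hroot i), conj_eq_inv_of_root hn0 (hroot j),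
          conj_eq_inv_of_root hn0 (hroot k), conj_eq_inv_of_root hn0 (hroot l)] using this
      have hane := hne i; have hbne := hne j; have hcne := hne k; have hdne := hne l
      have hprod : ζ i * ζ l = ζ k * ζ j := by
        have h' : (ζ i + ζ l) * (ζ k * ζ j) = (ζ k + ζ j) * (ζ i * ζ l) := by
          field_simp at hconj
          linear_combination hconj
        rw [hsum] at h'
        have hcb : ζ k + ζ j ≠ 0 := by rwa [← hsum]
        exact mul_left_cancel₀ hcb h'.symm
      have hfact : (ζ i - ζ j) * (ζ i - ζ k) = 0 := by
        linear_combination ζ i * hsum - hprod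
      rcases mul_eq_zero.mp hfact with hab | hac
      · exact Or.inl ⟨hinj (by linear_combination hab), hinj (by linear_combination hab - h)⟩
      · exact Or.inr ⟨hinj (by linear_combination hac), hinj (by linear_combination hac - h)⟩
end

section
/- Let K be a field, n ≥ 2, and let α_1,…,α_n ∈ K satisfy: (1) α_1+⋯+α_n = 0; (2) α_{i+1} ≠ α_i for all i = 1,…,n−1; (3) α_{i+1} − α_i = α_{k+1} − α_k only if i = k; (4) the partial sums s_k = α_1+⋯+α_k are nonzero for all k = 1,…,n−1. Then the nilpotent matrices A = Σ_{i=1}^{n−1} E_{i,i+1} and B = Σ_{i=1}^{n−1} s_i E_{i+1,i} generate the Lie algebra sl_n(K). -/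
open Matrix

attribute [local instance 100] LieRing.ofAssociativeRing

lemma eigen_sep {K M : Type*} [Field K] [AddCommGroup M] [Module K M]
    (S : Submodule K M) (T : M →ₗ[K] M) (hT : ∀ x ∈ S, T x ∈ S)
    {ι : Type*} [DecidableEq ι] (s : Finset ι) (lam : ι → K)
    (hinj : Set.InjOn lam s) :
    ∀ v : ι → M, (∀ i ∈ s, T (v i) = lam i • v i) → (∑ i ∈ s, v i) ∈ S →
      ∀ i ∈ s, v i ∈ S := by
  classical
  induction s using Finset.induction_on with
  | empty => simp
  | @insert a s ha ih =>
    intro v heig hsum i hi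
    have hTsum : T (∑ j ∈ insert a s, v j) = ∑ j ∈ insert a s, lam j • v j := by
      rw [map_sum]; exact Finset.sum_congr rfl heig
    have hw : (∑ j ∈ s, (lam j - lam a) • v j) ∈ S := by
      have h1 : T (∑ j ∈ insert a s, v j) - lam a • (∑ j ∈ insert a s, v j) ∈ S :=
        S.sub_mem (hT _ hsum) (S.smul_mem _ hsum)
      have h2 : T (∑ j ∈ insert a s, v j) - lam a • (∑ j ∈ insert a s, v j)
          = ∑ j ∈ s, (lam j - lam a) • v j := by
        rw [hTsum, Finset.smul_sum, ← Finset.sum_sub_distrib,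
          Finset.sum_insert ha]
        simp [sub_smul]
      rwa [h2] at h1
    have key : ∀ j ∈ s, v j ∈ S := by
      intro j hj
      have hmem : (lam j - lam a) • v j ∈ S := by
        refine ih (hinj.mono ?_) (fun i => (lam i - lam a) • v i) ?_ hw j hj
        · exact fun x hx => Finset.mem_insert_of_mem hx
        · intro i hi'
          rw [LinearMap.map_smul, heig i (Finset.mem_insert_of_mem hi'), smul_comm]
      have hne : lam j - lam a ≠ 0 := by
        intro h0
        have : (j : ι) = a := hinj (Finset.mem_insert_of_mem hj) (Finset.mem_insert_self a s)
          (sub_eq_zero.mp h0)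
        exact ha (this ▸ hj)
      have := S.smul_mem (lam j - lam a)⁻¹ hmem
      rwa [smul_smul, inv_mul_cancel₀ hne, one_smul] at this
    rcases Finset.mem_insert.mp hi with rfl | hi'
    · have : v i = (∑ j ∈ insert i s, v j) - ∑ j ∈ s, v j := by
        rw [Finset.sum_insert ha]; abel
      rw [this]
      exact S.sub_mem hsum (S.sum_mem fun j hj => key j hj)
    · exact key i hi'

lemma std_apply {α : Type*} [Zero α] {m n : Type*} [DecidableEq m] [DecidableEq n]
    (i a : m) (j b : n) (c : α) :
    Matrix.single i j c a b = if i = a ∧ j = b then c else 0 := rfl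

lemma diag_lie_std {K : Type*} [Field K] {n : ℕ} (d : Fin n → K) (i j : Fin n) (c : K) :
    ⁅Matrix.diagonal d, Matrix.single i j c⁆ = (d i - d j) • Matrix.single i j c := by
  ext a b
  simp only [Ring.lie_def, Matrix.sub_apply, Matrix.diagonal_mul, Matrix.mul_diagonal,
    Matrix.smul_apply, Matrix.single, of_apply, smul_eq_mul]
  by_cases ha : i = a <;> by_cases hb : j = b <;> simp [ha, hb] <;> ring

lemma std_lie_std {K : Type*} [Field K] {n : ℕ} (i j k : Fin n) (h : k ≠ i) (c d : K) :
    ⁅Matrix.single i j c, Matrix.single j k d⁆ = Matrix.single i k (c * d) := by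
  rw [Ring.lie_def, Matrix.single_mul_single_same]
  simp [Matrix.single_mul_single_of_ne, h]

lemma std_lie_std_diag {K : Type*} [Field K] {n : ℕ} (i j : Fin n) :
    ⁅Matrix.single i j (1:K), Matrix.single j i (1:K)⁆
      = Matrix.single i i (1:K) - Matrix.single j j (1:K) := by
  rw [Ring.lie_def, Matrix.single_mul_single_same, Matrix.single_mul_single_same, one_mul]

/-- If `α₁, …, αₙ` sum to zero, consecutive differences are nonzero and pairwise distinct,
and all proper initial partial sums `sₖ` are nonzero, then the nilpotent matrices
`A = ∑ E_{i,i+1}` and `B = ∑ sᵢ E_{i+1,i}` generate `sl_n(K)`. -/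
theorem stmt_11 {K : Type} [Field K] (n : ℕ) (hn : 2 ≤ n) (α : Fin n → K)
    (h1 : ∑ i, α i = 0)
    (h2 : ∀ i : ℕ, (hi : i + 1 < n) → α ⟨i + 1, hi⟩ ≠ α ⟨i, by omega⟩)
    (h3 : ∀ i k : ℕ, (hi : i + 1 < n) → (hk : k + 1 < n) →
      α ⟨i + 1, hi⟩ - α ⟨i, by omega⟩ = α ⟨k + 1, hk⟩ - α ⟨k, by omega⟩ → i = k)
    (h4 : ∀ k : ℕ, 1 ≤ k → k ≤ n - 1 →
      ∑ i ∈ Finset.univ.filter (fun i : Fin n => (i : ℕ) < k), α i ≠ 0) :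
    LieSubalgebra.lieSpan K (Matrix (Fin n) (Fin n) K)
      {Matrix.of fun i j : Fin n => if (i : ℕ) + 1 = (j : ℕ) then (1 : K) else 0,
       Matrix.of fun i j : Fin n => if (i : ℕ) = (j : ℕ) + 1 then
          ∑ i' ∈ Finset.univ.filter (fun i' : Fin n => (i' : ℕ) ≤ (j : ℕ)), α i'
        else 0} =
      LieAlgebra.SpecialLinear.sl (Fin n) K := by
  classical
  set A : Matrix (Fin n) (Fin n) K :=
    Matrix.of fun i j : Fin n => if (i : ℕ) + 1 = (j : ℕ) then (1 : K) else 0 with hA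
  set B : Matrix (Fin n) (Fin n) K :=
    Matrix.of fun i j : Fin n => if (i : ℕ) = (j : ℕ) + 1 then
          ∑ i' ∈ Finset.univ.filter (fun i' : Fin n => (i' : ℕ) ≤ (j : ℕ)), α i'
        else 0 with hB
  set S := LieSubalgebra.lieSpan K (Matrix (Fin n) (Fin n) K) {A, B} with hS
  set psum : ℕ → K := fun k => ∑ i ∈ Finset.univ.filter (fun i : Fin n => (i : ℕ) < k), α i
    with hpsum
  -- basic entry formulas
  have hAe : ∀ i j : Fin n, A i j = if (i : ℕ) + 1 = (j : ℕ) then (1:K) else 0 := fun i j => rfl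
  have hBe : ∀ i j : Fin n, B i j = if (i : ℕ) = (j : ℕ) + 1 then psum ((j:ℕ)+1) else 0 := by
    intro i j
    show (if (i : ℕ) = (j : ℕ) + 1 then
      ∑ i' ∈ Finset.univ.filter (fun i' : Fin n => (i' : ℕ) ≤ (j : ℕ)), α i' else 0) = _
    have : Finset.univ.filter (fun i' : Fin n => (i' : ℕ) ≤ (j:ℕ))
        = Finset.univ.filter (fun i' : Fin n => (i' : ℕ) < (j:ℕ)+1) :=
      Finset.filter_congr (fun x _ => by simp [Nat.lt_succ_iff])
    rw [this]
  -- partial sum facts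
  have hpsum0 : psum 0 = 0 := by simp [hpsum]
  have hpsumn : psum n = 0 := by
    have : Finset.univ.filter (fun i : Fin n => (i : ℕ) < n) = Finset.univ :=
      Finset.filter_true_of_mem (fun x _ => x.isLt)
    simp only [hpsum, this]; exact h1
  have hpsum_succ : ∀ k : ℕ, (hk : k < n) → psum (k+1) = psum k + α ⟨k, hk⟩ := by
    intro k hk
    have e : ∀ m : ℕ, psum m = ∑ i : Fin n, if (i:ℕ) < m then α i else 0 := by
      intro m; simp only [hpsum]; rw [Finset.sum_filter]
    rw [e, e]
    have : ∀ i : Fin n, (if (i:ℕ) < k + 1 then α i else 0)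
        = (if (i:ℕ) < k then α i else 0) + (if i = ⟨k, hk⟩ then α i else 0) := by
      intro i
      by_cases h' : (i:ℕ) < k
      · rw [if_pos (by omega), if_pos h', if_neg (fun h => by simp [Fin.ext_iff] at h; omega),
          add_zero]
      · by_cases h'' : (i:ℕ) = k
        · rw [if_pos (by omega), if_neg h', if_pos (Fin.ext h''), zero_add]
        · rw [if_neg (by omega), if_neg h', if_neg (fun h => h'' (by rw [h])), add_zero]
    rw [Finset.sum_congr rfl (fun i _ => this i), Finset.sum_add_distrib,
      Finset.sum_ite_eq' Finset.univ (⟨k, hk⟩ : Fin n) α, if_pos (Finset.mem_univ _)]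
  have hpsum_ne : ∀ k : ℕ, 1 ≤ k → k ≤ n - 1 → psum k ≠ 0 := h4
  -- A and B in S
  have hAmem : A ∈ S := LieSubalgebra.subset_lieSpan (by left; rfl)
  have hBmem : B ∈ S := LieSubalgebra.subset_lieSpan (by right; rfl)
  -- the products
  have hABe : ∀ i j : Fin n, (A * B) i j
      = if (i:ℕ) = (j:ℕ) ∧ (i:ℕ) + 1 < n then psum ((i:ℕ)+1) else 0 := by
    intro i j
    rw [Matrix.mul_apply]
    by_cases hi : (i:ℕ) + 1 < n
    · rw [Finset.sum_eq_single (⟨(i:ℕ)+1, hi⟩ : Fin n)]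
      · rw [hAe, hBe, if_pos rfl, one_mul]
        by_cases hij : (i:ℕ) = (j:ℕ)
        · rw [if_pos (show (i:ℕ)+1 = (j:ℕ)+1 by omega), if_pos ⟨hij, hi⟩, hij]
        · rw [if_neg (show ¬((i:ℕ)+1 = (j:ℕ)+1) by omega), if_neg (by tauto)]
      · intro k _ hk
        rw [hAe, if_neg (fun h => hk (Fin.ext h.symm)), zero_mul]
      · intro h; exact absurd (Finset.mem_univ _) h
    · rw [if_neg (by tauto)]
      apply Finset.sum_eq_zero
      intro k _
      rw [hAe, if_neg (by have := k.isLt; omega), zero_mul]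
  have hBAe : ∀ i j : Fin n, (B * A) i j
      = if (i:ℕ) = (j:ℕ) ∧ 1 ≤ (i:ℕ) then psum (i:ℕ) else 0 := by
    intro i j
    rw [Matrix.mul_apply]
    by_cases hi : 1 ≤ (i:ℕ)
    · have hi' : (i:ℕ) - 1 < n := by have := i.isLt; omega
      rw [Finset.sum_eq_single (⟨(i:ℕ)-1, hi'⟩ : Fin n)]
      · rw [hBe, hAe]
        rw [if_pos (show (i:ℕ) = (i:ℕ)-1+1 by omega)]
        by_cases hij : (i:ℕ) = (j:ℕ)
        · rw [if_pos (show (i:ℕ)-1+1 = (j:ℕ) by omega), if_pos ⟨hij, hi⟩, mul_one]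
          congr 1
          show (i:ℕ)-1+1 = (i:ℕ)
          omega
        · rw [if_neg (show ¬((i:ℕ)-1+1 = (j:ℕ)) by omega), if_neg (by tauto), mul_zero]
      · intro k _ hk
        rw [hBe, if_neg (fun h => hk (Fin.ext (show (k:ℕ) = (i:ℕ)-1 by omega))), zero_mul]
      · intro h; exact absurd (Finset.mem_univ _) h
    · rw [if_neg (by tauto)]
      apply Finset.sum_eq_zero
      intro k _
      rw [hBe, if_neg (by omega), zero_mul]
  -- the diagonal element
  have hABdiag : ⁅A, B⁆ = Matrix.diagonal α := by
    ext i j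
    rw [Ring.lie_def, Matrix.sub_apply, hABe, hBAe, Matrix.diagonal_apply]
    by_cases hij : i = j
    · have hij' : (i:ℕ) = (j:ℕ) := by rw [hij]
      have hi := i.isLt
      have e1 : (if (i:ℕ) = (j:ℕ) ∧ (i:ℕ) + 1 < n then psum ((i:ℕ)+1) else 0)
          = psum ((i:ℕ)+1) := by
        by_cases h' : (i:ℕ) + 1 < n
        · rw [if_pos ⟨hij', h'⟩]
        · rw [if_neg (by tauto), show (i:ℕ)+1 = n by omega, hpsumn]
      have e2 : (if (i:ℕ) = (j:ℕ) ∧ 1 ≤ (i:ℕ) then psum (i:ℕ) else 0) = psum (i:ℕ) := by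
        by_cases h' : 1 ≤ (i:ℕ)
        · rw [if_pos ⟨hij', h'⟩]
        · rw [if_neg (by tauto), show (i:ℕ) = 0 by omega, hpsum0]
      rw [e1, e2, if_pos hij, hpsum_succ (i:ℕ) hi]
      simp
    · have hij' : ¬((i:ℕ) = (j:ℕ)) := fun h => hij (Fin.ext h)
      rw [if_neg (by tauto), if_neg (by tauto), if_neg hij, sub_zero]
  have hdiagmem : Matrix.diagonal α ∈ S := hABdiag ▸ S.lie_mem hAmem hBmem
  -- eigen extraction setup
  set T : Matrix (Fin n) (Fin n) K →ₗ[K] Matrix (Fin n) (Fin n) K :=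
    (LieAlgebra.ad K (Matrix (Fin n) (Fin n) K) (Matrix.diagonal α) : _) with hT
  have hTS : ∀ x ∈ (S : Submodule K (Matrix (Fin n) (Fin n) K)), T x ∈
      (S : Submodule K (Matrix (Fin n) (Fin n) K)) := by
    intro x hx
    rw [LieSubalgebra.mem_toSubmodule] at hx ⊢
    exact S.lie_mem hdiagmem hx
  set sc : Fin n → Fin n := fun p => ⟨((p:ℕ)+1) % n, Nat.mod_lt _ (by omega)⟩ with hsc
  have hscv : ∀ p : Fin n, (p:ℕ)+1 < n → ((sc p : Fin n) : ℕ) = (p:ℕ)+1 := by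
    intro p hp; simp [hsc, Nat.mod_eq_of_lt hp]
  set fil : Finset (Fin n) := Finset.univ.filter (fun p : Fin n => (p:ℕ)+1 < n) with hfil
  have hmemfil : ∀ p : Fin n, p ∈ fil ↔ (p:ℕ)+1 < n := by
    intro p; simp [hfil]
  -- extraction for A
  have hEup1 : ∀ p : Fin n, (hp : (p:ℕ)+1 < n) →
      Matrix.single p (sc p) (1:K) ∈ S := by
    have hAsum : A = ∑ p ∈ fil, Matrix.single p (sc p) (if (p:ℕ)+1 < n then (1:K) else 0) := by
      ext i j
      rw [Matrix.sum_apply, Finset.sum_eq_single i]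
      · rw [hAe]
        by_cases hi : (i:ℕ)+1 < n
        · have hsci : ((sc i : Fin n) : ℕ) = (i:ℕ)+1 := hscv i hi
          by_cases hj : (i:ℕ)+1 = (j:ℕ)
          · rw [if_pos hj, std_apply,
              if_pos ⟨rfl, Fin.ext (by omega)⟩, if_pos hi]
          · rw [if_neg hj, std_apply,
              if_neg (fun h => hj (by rw [← hsci, h.2]))]
        · have := j.isLt
          rw [if_neg (by omega), if_neg (by omega), Matrix.single_zero, Matrix.zero_apply]
      · intro p _ hp
        rw [std_apply, if_neg (fun h => hp h.1)]
      · intro hi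
        rw [hmemfil] at hi
        rw [if_neg hi, Matrix.single_zero, Matrix.zero_apply]
    intro p hp
    have key := eigen_sep (S : Submodule K (Matrix (Fin n) (Fin n) K)) T hTS fil
      (fun p => α p - α (sc p))
      (by
        intro x hx y hy hxy
        rw [Finset.mem_coe, hmemfil] at hx hy
        have hx' : ((sc x : Fin n) : ℕ) = (x:ℕ)+1 := hscv x hx
        have hy' : ((sc y : Fin n) : ℕ) = (y:ℕ)+1 := hscv y hy
        have := h3 (x:ℕ) (y:ℕ) hx hy ?_
        · exact Fin.ext this
        · have e1 : α ⟨(x:ℕ)+1, hx⟩ = α (sc x) := by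
            congr 1; exact Fin.ext (show (x:ℕ)+1 = ((sc x : Fin n):ℕ) by omega)
          have e2 : α ⟨(y:ℕ)+1, hy⟩ = α (sc y) := by
            congr 1; exact Fin.ext (show (y:ℕ)+1 = ((sc y : Fin n):ℕ) by omega)
          have e3 : α ⟨(x:ℕ), by omega⟩ = α x := rfl
          have e4 : α ⟨(y:ℕ), by omega⟩ = α y := rfl
          rw [e1, e2, e3, e4]
          linear_combination -hxy)
      (fun p => Matrix.single p (sc p) (if (p:ℕ)+1 < n then (1:K) else 0))
      (by
        intro q _
        rw [hT]
        show ⁅Matrix.diagonal α, _⁆ = _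
        rw [diag_lie_std])
      (by rw [← hAsum, LieSubalgebra.mem_toSubmodule]; exact hAmem)
      p (by rw [hmemfil]; exact hp)
    have key' : Matrix.single p (sc p) (if (p:ℕ)+1 < n then (1:K) else 0) ∈ S := by
      rw [← LieSubalgebra.mem_toSubmodule]; exact key
    rwa [if_pos hp] at key'
  -- extraction for B
  have hEdown1 : ∀ p : Fin n, (hp : (p:ℕ)+1 < n) →
      Matrix.single (sc p) p (1:K) ∈ S := by
    have hBsum : B = ∑ p ∈ fil,
        Matrix.single (sc p) p (if (p:ℕ)+1 < n then psum ((p:ℕ)+1) else 0) := by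
      ext i j
      rw [Matrix.sum_apply, Finset.sum_eq_single j]
      · rw [hBe]
        by_cases hj : (j:ℕ)+1 < n
        · have hscj : ((sc j : Fin n) : ℕ) = (j:ℕ)+1 := hscv j hj
          by_cases hi : (i:ℕ) = (j:ℕ)+1
          · rw [if_pos hi, std_apply,
              if_pos ⟨Fin.ext (by omega), rfl⟩, if_pos hj]
          · rw [if_neg hi, std_apply,
              if_neg (fun h => hi (by rw [← h.1, hscj]))]
        · have := i.isLt
          rw [if_neg (by omega), if_neg (by omega), Matrix.single_zero, Matrix.zero_apply]
      · intro p _ hp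
        rw [std_apply, if_neg (fun h => hp h.2)]
      · intro hj
        rw [hmemfil] at hj
        rw [if_neg hj, Matrix.single_zero, Matrix.zero_apply]
    intro p hp
    have key := eigen_sep (S : Submodule K (Matrix (Fin n) (Fin n) K)) T hTS fil
      (fun p => α (sc p) - α p)
      (by
        intro x hx y hy hxy
        rw [Finset.mem_coe, hmemfil] at hx hy
        have hx' : ((sc x : Fin n) : ℕ) = (x:ℕ)+1 := hscv x hx
        have hy' : ((sc y : Fin n) : ℕ) = (y:ℕ)+1 := hscv y hy
        have := h3 (x:ℕ) (y:ℕ) hx hy ?_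
        · exact Fin.ext this
        · have e1 : α ⟨(x:ℕ)+1, hx⟩ = α (sc x) := by
            congr 1; exact Fin.ext (show (x:ℕ)+1 = ((sc x : Fin n):ℕ) by omega)
          have e2 : α ⟨(y:ℕ)+1, hy⟩ = α (sc y) := by
            congr 1; exact Fin.ext (show (y:ℕ)+1 = ((sc y : Fin n):ℕ) by omega)
          have e3 : α ⟨(x:ℕ), by omega⟩ = α x := rfl
          have e4 : α ⟨(y:ℕ), by omega⟩ = α y := rfl
          rw [e1, e2, e3, e4]
          linear_combination hxy)
      (fun p => Matrix.single (sc p) p (if (p:ℕ)+1 < n then psum ((p:ℕ)+1) else 0))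
      (by
        intro q _
        rw [hT]
        show ⁅Matrix.diagonal α, _⁆ = _
        rw [diag_lie_std])
      (by rw [← hBsum, LieSubalgebra.mem_toSubmodule]; exact hBmem)
      p (by rw [hmemfil]; exact hp)
    have key2 : Matrix.single (sc p) p (if (p:ℕ)+1 < n then psum ((p:ℕ)+1) else 0) ∈ S := by
      rw [← LieSubalgebra.mem_toSubmodule]; exact key
    rw [if_pos hp] at key2
    have hne : psum ((p:ℕ)+1) ≠ 0 := hpsum_ne ((p:ℕ)+1) (by omega) (by omega)
    have := S.smul_mem (psum ((p:ℕ)+1))⁻¹ key2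
    rwa [smul_single, smul_eq_mul, inv_mul_cancel₀ hne] at this
  -- all off-diagonal elementary matrices
  have hEup : ∀ d : ℕ, ∀ p q : Fin n, (q:ℕ) = (p:ℕ) + d + 1 → Matrix.single p q (1:K) ∈ S := by
    intro d
    induction d with
    | zero =>
      intro p q hq
      have hp : (p:ℕ)+1 < n := by have := q.isLt; omega
      have : q = sc p := Fin.ext (by rw [hscv p hp]; omega)
      rw [this]
      exact hEup1 p hp
    | succ d ih =>
      intro p q hq
      have hq' := q.isLt
      have hp : (p:ℕ)+1 < n := by omega
      set r : Fin n := ⟨(p:ℕ)+1, hp⟩ with hr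
      have h1' : Matrix.single p r (1:K) ∈ S := by
        have : r = sc p := Fin.ext (by rw [hscv p hp])
        rw [this]; exact hEup1 p hp
      have h2' : Matrix.single r q (1:K) ∈ S := ih r q (by simp [hr]; omega)
      have hqp : q ≠ p := fun h => by rw [h] at hq; omega
      have := S.lie_mem h1' h2'
      rwa [std_lie_std p r q hqp, one_mul] at this
  have hEdown : ∀ d : ℕ, ∀ p q : Fin n, (p:ℕ) = (q:ℕ) + d + 1 → Matrix.single p q (1:K) ∈ S := by
    intro d
    induction d with
    | zero =>
      intro p q hq
      have hq'' : (q:ℕ)+1 < n := by have := p.isLt; omega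
      have : p = sc q := Fin.ext (by rw [hscv q hq'']; omega)
      rw [this]
      exact hEdown1 q hq''
    | succ d ih =>
      intro p q hq
      have hp' := p.isLt
      have hr' : (p:ℕ)-1 < n := by omega
      set r : Fin n := ⟨(p:ℕ)-1, hr'⟩ with hr
      have hrn : (r:ℕ)+1 < n := by simp [hr]; omega
      have h1' : Matrix.single p r (1:K) ∈ S := by
        have : p = sc r := Fin.ext (by rw [hscv r hrn]; simp [hr]; omega)
        rw [this]; exact hEdown1 r hrn
      have h2' : Matrix.single r q (1:K) ∈ S := ih r q (by simp [hr]; omega)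
      have hqp : q ≠ p := fun h => by rw [h] at hq; omega
      have := S.lie_mem h1' h2'
      rwa [std_lie_std p r q hqp, one_mul] at this
  have hEod : ∀ p q : Fin n, p ≠ q → Matrix.single p q (1:K) ∈ S := by
    intro p q hpq
    have hne : (p:ℕ) ≠ (q:ℕ) := fun h => hpq (Fin.ext h)
    rcases lt_or_gt_of_ne hne with h | h
    · exact hEup ((q:ℕ) - (p:ℕ) - 1) p q (by omega)
    · exact hEdown ((p:ℕ) - (q:ℕ) - 1) p q (by omega)
  have hEdiag : ∀ p q : Fin n, p ≠ q →
      Matrix.single p p (1:K) - Matrix.single q q (1:K) ∈ S := by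
    intro p q hpq
    have := S.lie_mem (hEod p q hpq) (hEod q p hpq.symm)
    rwa [std_lie_std_diag] at this
  -- conclude
  have mem_sl : ∀ X : Matrix (Fin n) (Fin n) K,
      X ∈ LieAlgebra.SpecialLinear.sl (Fin n) K ↔ Matrix.trace X = 0 := fun X => Iff.rfl
  apply le_antisymm
  · rw [LieSubalgebra.lieSpan_le]
    have hAsl : A ∈ LieAlgebra.SpecialLinear.sl (Fin n) K := by
      rw [mem_sl]
      show ∑ i, A i i = 0
      exact Finset.sum_eq_zero fun i _ => by rw [hAe, if_neg (by omega)]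
    have hBsl : B ∈ LieAlgebra.SpecialLinear.sl (Fin n) K := by
      rw [mem_sl]
      show ∑ i, B i i = 0
      exact Finset.sum_eq_zero fun i _ => by rw [hBe, if_neg (by omega)]
    intro X hX
    rcases Set.mem_insert_iff.mp hX with rfl | hX'
    · exact hAsl
    · rw [Set.mem_singleton_iff] at hX'
      rw [hX']
      exact hBsl
  · intro X hX
    have htr : ∑ p : Fin n, X p p = 0 := (mem_sl X).mp hX
    set last : Fin n := ⟨n-1, by omega⟩ with hlast
    have hX' : X = ∑ p : Fin n, ∑ q : Fin n,
        (if p = q then X p p • (Matrix.single p p (1:K) - Matrix.single last last (1:K))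
         else X p q • Matrix.single p q (1:K)) := by
      have e1 : ∀ p q : Fin n,
          (if p = q then X p p • (Matrix.single p p (1:K) - Matrix.single last last (1:K))
           else X p q • Matrix.single p q (1:K))
          = X p q • Matrix.single p q (1:K)
            - (if p = q then X p p • Matrix.single last last (1:K) else 0) := by
        intro p q
        by_cases h : p = q
        · subst h; rw [if_pos rfl, if_pos rfl, smul_sub]
        · rw [if_neg h, if_neg h, sub_zero]
      have e2 : ∀ p : Fin n, (∑ q : Fin n,
          (if p = q then X p p • (Matrix.single p p (1:K) - Matrix.single last last (1:K))
           else X p q • Matrix.single p q (1:K)))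
          = (∑ q : Fin n, X p q • Matrix.single p q (1:K))
            - X p p • Matrix.single last last (1:K) := by
        intro p
        rw [Finset.sum_congr rfl (fun q _ => e1 p q), Finset.sum_sub_distrib,
          Finset.sum_ite_eq Finset.univ p
            (fun _ => X p p • Matrix.single last last (1:K)),
          if_pos (Finset.mem_univ p)]
      rw [Finset.sum_congr rfl (fun p _ => e2 p), Finset.sum_sub_distrib, ← Finset.sum_smul,
        htr, zero_smul, sub_zero]
      have e3 : ∀ p q : Fin n, X p q • Matrix.single p q (1:K) = Matrix.single p q (X p q) := by
        intro p q
        rw [smul_single, smul_eq_mul, mul_one]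
      rw [Finset.sum_congr rfl (fun p _ => Finset.sum_congr rfl (fun q _ => e3 p q))]
      exact matrix_eq_sum_single X
    rw [hX', ← LieSubalgebra.mem_toSubmodule]
    apply Submodule.sum_mem
    intro p _
    apply Submodule.sum_mem
    intro q _
    by_cases h : p = q
    · rw [if_pos h]
      apply Submodule.smul_mem
      rw [LieSubalgebra.mem_toSubmodule]
      by_cases hpl : p = last
      · rw [hpl, sub_self]
        exact S.zero_mem
      · exact hEdiag p last hpl
    · rw [if_neg h]
      apply Submodule.smul_mem
      rw [LieSubalgebra.mem_toSubmodule]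
      exact hEod p q h
end

section
/- Let K be a field of characteristic zero and let n ≥ 3 be odd. Then the nilpotent matrices M = Σ_{i=1}^{n−1} E_{i,i+1} (the upper shift matrix) and N = E_{n1} generate the Lie algebra sl_n(K). -/
set_option linter.unusedSectionVars false
set_option maxHeartbeats 1000000

attribute [local instance 100] LieRing.ofAssociativeRing

namespace Stmt13Aux

variable (K : Type) [Field K] (n : ℕ)

def Mm : Matrix (Fin n) (Fin n) K :=
  Matrix.of fun i j : Fin n => if (i : ℕ) + 1 = (j : ℕ) then (1 : K) else 0

def Nm : Matrix (Fin n) (Fin n) K :=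
  Matrix.of fun i j : Fin n => if (i : ℕ) = n - 1 ∧ (j : ℕ) = 0 then (1 : K) else 0

def LL : LieSubalgebra K (Matrix (Fin n) (Fin n) K) :=
  LieSubalgebra.lieSpan K _ {Mm K n, Nm K n}

lemma Mm_mem : Mm K n ∈ LL K n := LieSubalgebra.subset_lieSpan (by simp)

lemma Nm_mem : Nm K n ∈ LL K n := LieSubalgebra.subset_lieSpan (by simp)

def ee (k a b : ℕ) : K :=
  if a + k = (n - 1) + b ∧ b ≤ k then (-1 : K) ^ b * (k.choose b : K) else 0

def Xm (k : ℕ) : Matrix (Fin n) (Fin n) K :=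
  Matrix.of fun i j : Fin n => ee K n k (i : ℕ) (j : ℕ)

lemma sum_shift_left (f : ℕ → K) (i : Fin n) :
    (∑ l : Fin n, (if (i : ℕ) + 1 = (l : ℕ) then (1:K) else 0) * f (l : ℕ)) =
      if (i : ℕ) + 1 < n then f ((i : ℕ) + 1) else 0 := by
  split
  · next h =>
    rw [Finset.sum_eq_single (⟨(i:ℕ)+1, h⟩ : Fin n)]
    · simp
    · intro b _ hb
      rw [if_neg, zero_mul]
      intro hc
      exact hb (by ext; simp [← hc])
    · simp
  · next h =>
    apply Finset.sum_eq_zero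
    intro l _
    rw [if_neg, zero_mul]
    have := l.isLt
    omega

lemma sum_shift_right (f : ℕ → K) (j : Fin n) :
    (∑ l : Fin n, f (l : ℕ) * (if (l : ℕ) + 1 = (j : ℕ) then (1:K) else 0)) =
      if 1 ≤ (j : ℕ) then f ((j : ℕ) - 1) else 0 := by
  have hj := j.isLt
  split
  · next h =>
    rw [Finset.sum_eq_single (⟨(j:ℕ)-1, by omega⟩ : Fin n)]
    · simp; omega
    · intro b _ hb
      rw [if_neg, mul_zero]
      intro hc
      exact hb (by ext; simp; omega)
    · simp
  · next h =>
    apply Finset.sum_eq_zero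
    intro l _
    rw [if_neg (by omega), mul_zero]

lemma ee_step (k i j : ℕ) (hn : 2 ≤ n) (hi : i < n) (hj : j < n) :
    ((if i + 1 < n then (ee K n k (i+1) j : K) else 0) -
      (if 1 ≤ j then ee K n k i (j-1) else 0)) = ee K n (k+1) i j := by
  have e1 : (if i + 1 < n then (ee K n k (i+1) j : K) else 0) =
      (if j ≤ k ∧ i + (k+1) = (n-1) + j then (-1 : K) ^ j * (k.choose j : K) else 0) := by
    unfold ee
    split_ifs <;> first | rfl | omega
  have e2 : (if 1 ≤ j then (ee K n k i (j-1) : K) else 0) =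
      (if 1 ≤ j ∧ j ≤ k + 1 ∧ i + (k+1) = (n-1) + j
        then (-1 : K) ^ (j-1) * (k.choose (j-1) : K) else 0) := by
    unfold ee
    split_ifs <;> first | rfl | omega
  rw [e1, e2]
  unfold ee
  by_cases hlin : i + (k+1) = (n-1) + j
  · rw [if_pos (show i + (k+1) = (n-1) + j ∧ j ≤ k + 1 from ⟨hlin, by omega⟩)]
    by_cases hjk : j ≤ k
    · rw [if_pos (show j ≤ k ∧ i + (k+1) = (n-1) + j from ⟨hjk, hlin⟩)]
      by_cases hj0 : 1 ≤ j
      · rw [if_pos (show 1 ≤ j ∧ j ≤ k + 1 ∧ i + (k+1) = (n-1) + j from ⟨hj0, by omega, hlin⟩)]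
        obtain ⟨m, rfl⟩ : ∃ m, j = m + 1 := ⟨j - 1, by omega⟩
        simp only [Nat.add_sub_cancel]
        rw [Nat.choose_succ_succ' k m]
        push_cast
        ring
      · have hj' : j = 0 := by omega
        subst hj'
        rw [if_neg (show ¬(1 ≤ 0 ∧ 0 ≤ k + 1 ∧ i + (k+1) = (n-1) + 0) by omega)]
        simp
    · have hj' : j = k + 1 := by omega
      subst hj'
      rw [if_neg (show ¬(k + 1 ≤ k ∧ i + (k+1) = (n-1) + (k+1)) by omega),
        if_pos (show 1 ≤ k+1 ∧ k+1 ≤ k+1 ∧ i + (k+1) = (n-1) + (k+1) from ⟨by omega, by omega, hlin⟩)]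
      simp only [Nat.add_sub_cancel, Nat.choose_self, Nat.choose_succ_self_right]
      simp [pow_succ]
  · rw [if_neg (show ¬(j ≤ k ∧ i + (k+1) = (n-1) + j) by omega),
      if_neg (show ¬(1 ≤ j ∧ j ≤ k + 1 ∧ i + (k+1) = (n-1) + j) by omega),
      if_neg (show ¬(i + (k+1) = (n-1) + j ∧ j ≤ k + 1) by omega)]
    simp

lemma Xm_zero (hn : 1 ≤ n) : Xm K n 0 = Nm K n := by
  ext i j
  have hi := i.isLt
  simp only [Xm, Nm, ee, Matrix.of_apply]
  by_cases h : (i : ℕ) = n - 1 ∧ (j : ℕ) = 0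
  · rw [if_pos ⟨by omega, by omega⟩, if_pos h]
    simp [h.2]
  · rw [if_neg (by omega), if_neg h]

lemma lie_Mm_Xm (hn : 2 ≤ n) (k : ℕ) : ⁅Mm K n, Xm K n k⁆ = Xm K n (k+1) := by
  ext i j
  rw [Ring.lie_def, Matrix.sub_apply]
  have h1 : (Mm K n * Xm K n k) i j =
      if (i:ℕ) + 1 < n then (ee K n k ((i:ℕ)+1) (j:ℕ) : K) else 0 := by
    rw [Matrix.mul_apply]
    simp only [Mm, Xm, Matrix.of_apply]
    exact sum_shift_left K n (fun a => ee K n k a (j:ℕ)) i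
  have h2 : (Xm K n k * Mm K n) i j =
      if 1 ≤ (j:ℕ) then (ee K n k (i:ℕ) ((j:ℕ)-1) : K) else 0 := by
    rw [Matrix.mul_apply]
    simp only [Mm, Xm, Matrix.of_apply]
    exact sum_shift_right K n (fun b => ee K n k (i:ℕ) b) j
  rw [h1, h2]
  exact ee_step K n k i j hn i.isLt j.isLt

lemma Xm_mem (hn : 2 ≤ n) (k : ℕ) : Xm K n k ∈ LL K n := by
  induction k with
  | zero => rw [Xm_zero K n (by omega)]; exact Nm_mem K n
  | succ k ih =>
    rw [← lie_Mm_Xm K n hn k]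
    exact (LL K n).lie_mem (Mm_mem K n) ih



-- binomial facts
lemma choose_step (n k : ℕ) (h : 2 * (k + 1) ≤ n) : n.choose k < n.choose (k + 1) := by
  have hpos : 0 < n.choose k := Nat.choose_pos (by omega)
  have he := Nat.choose_succ_right_eq n k
  have h1 : n.choose k * (k + 1) < n.choose k * (n - k) :=
    (Nat.mul_lt_mul_left hpos).mpr (by omega)
  have h2 : n.choose (k + 1) * (k + 1) > n.choose k * (k + 1) := by omega
  exact Nat.lt_of_mul_lt_mul_right h2

lemma choose_lt (n a b : ℕ) (h1 : a < b) (h2 : 2 * b ≤ n) : n.choose a < n.choose b := by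
  induction b with
  | zero => omega
  | succ m ih =>
    rcases Nat.lt_or_ge a m with h | h
    · exact (ih h (by omega)).trans (choose_step n m (by omega))
    · have : a = m := by omega
      subst this
      exact choose_step n a (by omega)

lemma choose_ne (n k l : ℕ) (hodd : Odd n) (h1 : 1 ≤ k) (hkl : k < l) (h2 : l ≤ n - 1)
    (hpar : k % 2 = l % 2) : n.choose k ≠ n.choose l := by
  have hn1 : 1 ≤ n := by
    rcases hodd with ⟨m, hm⟩; omega
  have hne : 2 * l ≠ n ∧ 2 * k ≠ n := by
    constructor <;> · rintro rfl; rcases hodd with ⟨m, hm⟩; omega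
  rcases Nat.lt_or_ge (2 * l) n with hl | hl
  · exact (choose_lt n k l hkl (by omega)).ne
  · have hsyml : n.choose (n - l) = n.choose l := Nat.choose_symm (by omega)
    rcases Nat.lt_or_ge (2 * k) n with hk | hk
    · -- k small, l large
      have hlpar : (n - l) % 2 ≠ l % 2 := by
        rcases hodd with ⟨m, hm⟩; omega
      have hkl' : k ≠ n - l := by
        intro h; rw [h] at hpar; exact hlpar hpar
      rcases Nat.lt_or_ge k (n - l) with h | h
      · have := choose_lt n k (n - l) h (by omega)
        omega
      · have := choose_lt n (n - l) k (by omega) (by omega)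
        omega
    · -- both large
      have hsymk : n.choose (n - k) = n.choose k := Nat.choose_symm (by omega)
      have := choose_lt n (n - l) (n - k) (by omega) (by omega)
      omega



variable [CharZero K]

/-- eigenvalues -/
def dd (a : ℕ) : K := (-1 : K) ^ a * (n.choose (a + 1) : K)

lemma dd_ne (hodd : Odd n) (a b : ℕ) (hab : a < b) (hb : b ≤ n - 2) :
    dd K n a ≠ dd K n b := by
  have hn3 : 1 ≤ n := by rcases hodd with ⟨m, hm⟩; omega
  have hca : 0 < n.choose (a + 1) := Nat.choose_pos (by omega)
  have hcb : 0 < n.choose (b + 1) := Nat.choose_pos (by omega)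
  intro h
  unfold dd at h
  rcases Nat.even_or_odd a with hea | hoa <;> rcases Nat.even_or_odd b with heb | hob
  · rw [hea.neg_one_pow, heb.neg_one_pow, one_mul, one_mul] at h
    exact choose_ne n (a+1) (b+1) hodd (by omega) (by omega) (by omega)
      (by rcases hea with ⟨x, hx⟩; rcases heb with ⟨y, hy⟩; omega) (Nat.cast_inj.mp h)
  · rw [hea.neg_one_pow, hob.neg_one_pow, one_mul, neg_one_mul] at h
    have : ((n.choose (a+1) + n.choose (b+1) : ℕ) : K) = 0 := by push_cast; rw [h]; ring
    have := Nat.cast_eq_zero.mp this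
    omega
  · rw [hoa.neg_one_pow, heb.neg_one_pow, one_mul, neg_one_mul] at h
    have : ((n.choose (a+1) + n.choose (b+1) : ℕ) : K) = 0 := by push_cast; rw [← h]; ring
    have := Nat.cast_eq_zero.mp this
    omega
  · rw [hoa.neg_one_pow, hob.neg_one_pow, neg_one_mul, neg_one_mul, neg_inj] at h
    exact choose_ne n (a+1) (b+1) hodd (by omega) (by omega) (by omega)
      (by rcases hoa with ⟨x, hx⟩; rcases hob with ⟨y, hy⟩; omega) (Nat.cast_inj.mp h)

lemma dd_ne' (hodd : Odd n) (a b : ℕ) (hab : a ≠ b) (ha : a ≤ n - 2) (hb : b ≤ n - 2) :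
    dd K n a ≠ dd K n b := by
  rcases Nat.lt_or_ge a b with h | h
  · exact dd_ne K n hodd a b h hb
  · exact (dd_ne K n hodd b a (by omega) ha).symm



def hf (a : ℕ) : K := (-1:K)^a * (((n-1).choose a : ℕ) : K)

lemma Hm_apply (i j : Fin n) :
    Xm K n (n-1) i j = if (i:ℕ) = (j:ℕ) then hf K n (i:ℕ) else 0 := by
  have hj := j.isLt
  have hi := i.isLt
  simp only [Xm, ee, Matrix.of_apply, hf]
  by_cases h : (i:ℕ) = (j:ℕ)
  · rw [if_pos (show (i:ℕ) + (n-1) = (n-1) + (j:ℕ) ∧ (j:ℕ) ≤ n-1 from ⟨by omega, by omega⟩),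
      if_pos h, h]
  · rw [if_neg (by omega), if_neg h]

lemma lie_H_apply (Y : Matrix (Fin n) (Fin n) K) (i j : Fin n) :
    ⁅Xm K n (n-1), Y⁆ i j = (hf K n (i:ℕ) - hf K n (j:ℕ)) * Y i j := by
  rw [Ring.lie_def, Matrix.sub_apply, Matrix.mul_apply, Matrix.mul_apply]
  have h1 : (∑ l : Fin n, Xm K n (n-1) i l * Y l j) = hf K n (i:ℕ) * Y i j := by
    rw [Finset.sum_eq_single i]
    · rw [Hm_apply, if_pos rfl]
    · intro b _ hb
      rw [Hm_apply, if_neg (fun hc => hb (Fin.val_injective hc.symm)), zero_mul]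
    · simp
  have h2 : (∑ l : Fin n, Y i l * Xm K n (n-1) l j) = Y i j * hf K n (j:ℕ) := by
    rw [Finset.sum_eq_single j]
    · rw [Hm_apply, if_pos rfl]
    · intro b _ hb
      rw [Hm_apply, if_neg (fun hc => hb (Fin.val_injective hc)), mul_zero]
    · simp
  rw [h1, h2]
  ring

def Dg (g : Fin n → K) : Matrix (Fin n) (Fin n) K :=
  Matrix.of fun i j : Fin n => if (i:ℕ) + 1 = (j:ℕ) then g i else 0

lemma Dg_one : Dg K n (fun _ => (1:K)) = Mm K n := rfl

lemma lie_H_Dg (hn : 1 ≤ n) (g : Fin n → K) :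
    ⁅Xm K n (n-1), Dg K n g⁆ = Dg K n (fun i => dd K n (i:ℕ) * g i) := by
  ext i j
  rw [lie_H_apply]
  simp only [Dg, Matrix.of_apply]
  by_cases h : (i:ℕ) + 1 = (j:ℕ)
  · rw [if_pos h, if_pos h]
    have hval : hf K n (i:ℕ) - hf K n (j:ℕ) = dd K n (i:ℕ) := by
      rw [← h]
      unfold hf dd
      obtain ⟨m, rfl⟩ : ∃ m, n = m + 1 := ⟨n - 1, by omega⟩
      simp only [Nat.add_sub_cancel]
      rw [Nat.choose_succ_succ m (i:ℕ), pow_succ]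
      push_cast
      ring
    rw [hval]
  · rw [if_neg h, if_neg h, mul_zero]

lemma shift_op_mem (hn : 2 ≤ n) (g : Fin n → K) (c : K) (hg : Dg K n g ∈ LL K n) :
    Dg K n (fun i => (dd K n (i:ℕ) - c) * g i) ∈ LL K n := by
  have h1 : Dg K n (fun i => (dd K n (i:ℕ) - c) * g i)
      = ⁅Xm K n (n-1), Dg K n g⁆ - c • Dg K n g := by
    rw [lie_H_Dg K n (by omega)]
    ext i j
    simp only [Dg, Matrix.sub_apply, Matrix.smul_apply, Matrix.of_apply, smul_eq_mul]
    by_cases h : (i:ℕ) + 1 = (j:ℕ)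
    · rw [if_pos h, if_pos h, if_pos h]
      ring
    · rw [if_neg h, if_neg h, if_neg h]
      ring
  rw [h1]
  exact (LL K n).sub_mem ((LL K n).lie_mem (Xm_mem K n hn _) hg) ((LL K n).smul_mem c hg)

lemma extract (hn : 3 ≤ n) (hodd : Odd n) :
    ∀ m : ℕ, ∀ s : Finset (Fin n), s.card ≤ m → ∀ g : Fin n → K,
      Dg K n g ∈ LL K n → (∀ i : Fin n, (i:ℕ) < n - 1 → g i ≠ 0 → i ∈ s) →
      ∀ a : Fin n, (a:ℕ) < n - 1 →
      Dg K n (fun i => if i = a then g i else 0) ∈ LL K n := by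
  intro m
  induction m with
  | zero =>
    intro s hs g hg hsupp a ha
    have hcard : s = ∅ := Finset.card_eq_zero.mp (by omega)
    have hz : (fun i : Fin n => if i = a then g i else 0) = fun _ => 0 := by
      funext i
      split_ifs with h
      · subst h
        by_contra hgi
        have := hsupp i ha hgi
        rw [hcard] at this
        exact absurd this (Finset.notMem_empty i)
      · rfl
    rw [hz]
    have hzz : Dg K n (fun _ => (0:K)) = 0 := by
      ext i j; simp [Dg]
    rw [hzz]
    exact (LL K n).zero_mem
  | succ m ih =>
    intro s hs g hg hsupp a ha
    by_cases hb : ∃ b, b ∈ s ∧ b ≠ a ∧ (b:ℕ) < n - 1 ∧ g b ≠ 0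
    · obtain ⟨b, hbs, hba, hbn, hgb⟩ := hb
      have hg' : Dg K n (fun i => (dd K n (i:ℕ) - dd K n (b:ℕ)) * g i) ∈ LL K n :=
        shift_op_mem K n (by omega) g (dd K n (b:ℕ)) hg
      have hsupp' : ∀ i : Fin n, (i:ℕ) < n - 1 →
          (dd K n (i:ℕ) - dd K n (b:ℕ)) * g i ≠ 0 → i ∈ s.erase b := by
        intro i hi hgi
        have h1 : g i ≠ 0 := fun h => hgi (by rw [h, mul_zero])
        have h2 : i ≠ b := by
          rintro rfl
          exact hgi (by rw [sub_self, zero_mul])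
        exact Finset.mem_erase.mpr ⟨h2, hsupp i hi h1⟩
      have hcard' : (s.erase b).card ≤ m := by
        have h1 := Finset.card_erase_of_mem hbs
        have h2 : 1 ≤ s.card := Finset.card_pos.mpr ⟨b, hbs⟩
        omega
      have hres := ih (s.erase b) hcard' _ hg' hsupp' a ha
      have hcne : dd K n (a:ℕ) - dd K n (b:ℕ) ≠ 0 :=
        sub_ne_zero.mpr (dd_ne' K n hodd (a:ℕ) (b:ℕ)
          (fun h => hba (Fin.val_injective h.symm)) (by omega) (by omega))
      have heq : Dg K n (fun i => if i = a then g i else 0)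
          = (dd K n (a:ℕ) - dd K n (b:ℕ))⁻¹ •
            Dg K n (fun i => if i = a then (dd K n (i:ℕ) - dd K n (b:ℕ)) * g i else 0) := by
        ext i j
        simp only [Dg, Matrix.smul_apply, Matrix.of_apply, smul_eq_mul]
        by_cases h : (i:ℕ) + 1 = (j:ℕ)
        · rw [if_pos h, if_pos h]
          by_cases h2 : i = a
          · subst h2
            rw [if_pos rfl, if_pos rfl, ← mul_assoc, inv_mul_cancel₀ hcne, one_mul]
          · rw [if_neg h2, if_neg h2, mul_zero]
        · rw [if_neg h, if_neg h, mul_zero]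
      rw [heq]
      exact (LL K n).smul_mem _ hres
    · push_neg at hb
      have heq : Dg K n (fun i => if i = a then g i else 0) = Dg K n g := by
        ext i j
        simp only [Dg, Matrix.of_apply]
        by_cases h : (i:ℕ) + 1 = (j:ℕ)
        · rw [if_pos h, if_pos h]
          by_cases h2 : i = a
          · rw [if_pos h2]
          · rw [if_neg h2]
            have hi : (i:ℕ) < n - 1 := by have := j.isLt; omega
            by_cases hgi : g i = 0
            · rw [hgi]
            · exact absurd (hb i (hsupp i hi hgi) h2 hi) hgi
        · rw [if_neg h, if_neg h]
      rw [heq]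
      exact hg

lemma delta_mem (hn : 3 ≤ n) (hodd : Odd n) (a : Fin n) (ha : (a:ℕ) < n - 1) :
    Dg K n (fun i => if i = a then (1:K) else 0) ∈ LL K n := by
  have h := extract K n hn hodd n Finset.univ
    (by simpa using le_refl n) (fun _ => (1:K))
    (by rw [Dg_one]; exact Mm_mem K n) (fun i _ _ => Finset.mem_univ i) a ha
  exact h

/-- elementary matrices -/
def Eb (i j : Fin n) : Matrix (Fin n) (Fin n) K := Matrix.single i j (1:K)

lemma lie_Eb_Eb (a b d : Fin n) (h2 : d ≠ a) : ⁅Eb K n a b, Eb K n b d⁆ = Eb K n a d := by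
  rw [Ring.lie_def]
  unfold Eb
  rw [Matrix.single_mul_single_same, Matrix.single_mul_single_of_ne (h := h2)]
  simp

lemma lie_Eb_diag (a b : Fin n) (h : a ≠ b) :
    ⁅Eb K n a b, Eb K n b a⁆ = Eb K n a a - Eb K n b b := by
  rw [Ring.lie_def]
  unfold Eb
  rw [Matrix.single_mul_single_same, Matrix.single_mul_single_same]
  simp

lemma Eb_superdiag (hn : 3 ≤ n) (hodd : Odd n) (i j : Fin n) (hij : (i:ℕ) + 1 = (j:ℕ)) :
    Eb K n i j ∈ LL K n := by
  have hj := j.isLt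
  have hd := delta_mem K n hn hodd i (by omega)
  have heq : Dg K n (fun i' => if i' = i then (1:K) else 0) = Eb K n i j := by
    ext a b
    simp only [Dg, Eb, Matrix.single, Matrix.of_apply]
    by_cases h1 : i = a ∧ j = b
    · rcases h1 with ⟨rfl, rfl⟩
      rw [if_pos hij, if_pos rfl, if_pos ⟨rfl, rfl⟩]
    · rw [if_neg h1]
      by_cases h2 : (a:ℕ) + 1 = (b:ℕ)
      · rw [if_pos h2]
        by_cases h3 : a = i
        · exfalso
          apply h1
          have hva : (a:ℕ) = (i:ℕ) := by rw [h3]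
          exact ⟨h3.symm, Fin.val_injective (by omega)⟩
        · rw [if_neg h3]
      · rw [if_neg h2]
  rw [← heq]
  exact hd

lemma Eb_upper (hn : 3 ≤ n) (hodd : Odd n) :
    ∀ gap : ℕ, ∀ i j : Fin n, (j:ℕ) = (i:ℕ) + gap + 1 → Eb K n i j ∈ LL K n := by
  intro gap
  induction gap with
  | zero => exact fun i j h => Eb_superdiag K n hn hodd i j (by omega)
  | succ g ih =>
    intro i j h
    have hj := j.isLt
    have hmid : (i:ℕ) + 1 < n := by omega
    have h1 : Eb K n i ⟨(i:ℕ)+1, hmid⟩ ∈ LL K n := Eb_superdiag K n hn hodd i _ rfl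
    have h2 : Eb K n ⟨(i:ℕ)+1, hmid⟩ j ∈ LL K n :=
      ih _ j (show (j:ℕ) = ((i:ℕ)+1) + g + 1 by omega)
    have h3 : ⁅Eb K n i ⟨(i:ℕ)+1, hmid⟩, Eb K n ⟨(i:ℕ)+1, hmid⟩ j⁆ = Eb K n i j :=
      lie_Eb_Eb K n i _ j (by
        intro hc
        have : (j:ℕ) = (i:ℕ) := by rw [hc]
        omega)
    rw [← h3]
    exact (LL K n).lie_mem h1 h2

lemma Nm_eq_Eb (hn : 3 ≤ n) :
    Nm K n = Eb K n ⟨n-1, by omega⟩ ⟨0, by omega⟩ := by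
  ext a b
  simp only [Nm, Eb, Matrix.single, Matrix.of_apply]
  by_cases h : (a:ℕ) = n - 1 ∧ (b:ℕ) = 0
  · rw [if_pos h, if_pos ⟨Fin.val_injective h.1.symm, Fin.val_injective h.2.symm⟩]
  · rw [if_neg h, if_neg]
    intro hc
    obtain ⟨hc1, hc2⟩ := hc
    exact h ⟨by rw [← hc1], by rw [← hc2]⟩

lemma Eb_all (hn : 3 ≤ n) (hodd : Odd n) (i j : Fin n) (h : i ≠ j) :
    Eb K n i j ∈ LL K n := by
  have hi := i.isLt
  have hj := j.isLt
  have hvne : (i:ℕ) ≠ (j:ℕ) := fun hc => h (Fin.val_injective hc)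
  have hcol : ∀ a : Fin n, 1 ≤ (a:ℕ) → Eb K n a ⟨0, by omega⟩ ∈ LL K n := by
    intro a ha1
    by_cases haw : (a:ℕ) = n - 1
    · have ha' : a = ⟨n-1, by omega⟩ := Fin.val_injective haw
      rw [ha', ← Nm_eq_Eb K n hn]
      exact Nm_mem K n
    · have ha := a.isLt
      have h1 : Eb K n a ⟨n-1, by omega⟩ ∈ LL K n :=
        Eb_upper K n hn hodd (n - 1 - (a:ℕ) - 1) a _
          (show n - 1 = (a:ℕ) + (n - 1 - (a:ℕ) - 1) + 1 by omega)
      have h2 : Eb K n ⟨n-1, by omega⟩ ⟨0, by omega⟩ ∈ LL K n := by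
        rw [← Nm_eq_Eb K n hn]; exact Nm_mem K n
      have h3 : ⁅Eb K n a ⟨n-1, by omega⟩, Eb K n ⟨n-1, by omega⟩ ⟨0, by omega⟩⁆
          = Eb K n a ⟨0, by omega⟩ :=
        lie_Eb_Eb K n a _ _ (by
          intro hc
          have : (0:ℕ) = (a:ℕ) := congrArg Fin.val hc
          omega)
      rw [← h3]
      exact (LL K n).lie_mem h1 h2
  rcases Nat.lt_or_ge (i:ℕ) (j:ℕ) with hlt | hge
  · exact Eb_upper K n hn hodd ((j:ℕ) - (i:ℕ) - 1) i j (by omega)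
  · have hgt : (j:ℕ) < (i:ℕ) := by omega
    by_cases hj0 : (j:ℕ) = 0
    · have hj' : j = ⟨0, by omega⟩ := Fin.val_injective hj0
      rw [hj']
      exact hcol i (by omega)
    · have h1 : Eb K n i ⟨0, by omega⟩ ∈ LL K n := hcol i (by omega)
      have h2 : Eb K n ⟨0, by omega⟩ j ∈ LL K n :=
        Eb_upper K n hn hodd ((j:ℕ) - 1) _ j (show (j:ℕ) = 0 + ((j:ℕ) - 1) + 1 by omega)
      have h3 : ⁅Eb K n i ⟨0, by omega⟩, Eb K n ⟨0, by omega⟩ j⁆ = Eb K n i j :=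
        lie_Eb_Eb K n i _ j (fun hc => h hc.symm)
      rw [← h3]
      exact (LL K n).lie_mem h1 h2

lemma Eb_diag_mem (hn : 3 ≤ n) (hodd : Odd n) (i : Fin n) :
    Eb K n i i - Eb K n ⟨0, by omega⟩ ⟨0, by omega⟩ ∈ LL K n := by
  by_cases h : i = ⟨0, by omega⟩
  · rw [h, sub_self]; exact (LL K n).zero_mem
  · rw [← lie_Eb_diag K n i ⟨0, by omega⟩ h]
    exact (LL K n).lie_mem (Eb_all K n hn hodd i _ h) (Eb_all K n hn hodd _ i (fun hc => h hc.symm))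

lemma sum_mem_LL {ι : Type} (s : Finset ι) (f : ι → Matrix (Fin n) (Fin n) K)
    (h : ∀ i ∈ s, f i ∈ LL K n) : (∑ i ∈ s, f i) ∈ LL K n := by
  classical
  induction s using Finset.induction with
  | empty => rw [Finset.sum_empty]; exact (LL K n).zero_mem
  | insert a s0 hni ih0 =>
    next =>
      rw [Finset.sum_insert hni]
      exact (LL K n).add_mem (h a (Finset.mem_insert_self a s0))
        (ih0 (fun i hi => h i (Finset.mem_insert_of_mem hi)))

lemma sl_le (hn : 3 ≤ n) (hodd : Odd n) :
    LieAlgebra.SpecialLinear.sl (Fin n) K ≤ LL K n := by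
  intro X hX
  have htr : (∑ i : Fin n, X i i) = 0 := by
    have h0 : Matrix.trace X = 0 := hX
    simpa [Matrix.trace, Matrix.diag] using h0
  have hz : 0 < n := by omega
  have hdiag : (∑ i : Fin n, Matrix.single i i (X i i))
      = ∑ i : Fin n, X i i • (Eb K n i i - Eb K n ⟨0, hz⟩ ⟨0, hz⟩) := by
    have h1 : (∑ i : Fin n, X i i • (Eb K n i i - Eb K n ⟨0, hz⟩ ⟨0, hz⟩))
        = (∑ i : Fin n, X i i • Eb K n i i) - (∑ i : Fin n, X i i) • Eb K n ⟨0, hz⟩ ⟨0, hz⟩ := by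
      rw [Finset.sum_smul]
      rw [← Finset.sum_sub_distrib]
      exact Finset.sum_congr rfl (fun i _ => smul_sub _ _ _)
    rw [h1, htr, zero_smul, sub_zero]
    exact Finset.sum_congr rfl (fun i _ => by
      rw [Eb, Matrix.smul_single, smul_eq_mul, mul_one])
  have hsum : X = (∑ i : Fin n, X i i • (Eb K n i i - Eb K n ⟨0, hz⟩ ⟨0, hz⟩))
      + ∑ i : Fin n, ∑ j ∈ Finset.univ.erase i, Matrix.single i j (X i j) := by
    conv_lhs => rw [Matrix.matrix_eq_sum_single X]
    rw [← hdiag, ← Finset.sum_add_distrib]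
    exact Finset.sum_congr rfl (fun i _ =>
      (Finset.add_sum_erase _ _ (Finset.mem_univ i)).symm)
  rw [hsum]
  apply (LL K n).add_mem
  · apply sum_mem_LL
    intro i _
    exact (LL K n).smul_mem _ (Eb_diag_mem K n hn hodd i)
  · apply sum_mem_LL
    intro i _
    apply sum_mem_LL
    intro j hj
    have hji : j ≠ i := (Finset.mem_erase.mp hj).1
    have : Matrix.single i j (X i j) = X i j • Eb K n i j := by
      rw [Eb, Matrix.smul_single, smul_eq_mul, mul_one]
    rw [this]
    exact (LL K n).smul_mem _ (Eb_all K n hn hodd i j (fun hc => hji hc.symm))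

lemma main_result (hn : 3 ≤ n) (hodd : Odd n) :
    LL K n = LieAlgebra.SpecialLinear.sl (Fin n) K := by
  apply le_antisymm
  · apply LieSubalgebra.lieSpan_le.mpr
    intro x hx
    simp only [Set.mem_insert_iff, Set.mem_singleton_iff] at hx
    rcases hx with rfl | rfl
    · show Matrix.trace (Mm K n) = 0
      simp only [Matrix.trace, Matrix.diag, Mm, Matrix.of_apply]
      exact Finset.sum_eq_zero (fun i _ => if_neg (by omega))
    · show Matrix.trace (Nm K n) = 0
      simp only [Matrix.trace, Matrix.diag, Nm, Matrix.of_apply]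
      exact Finset.sum_eq_zero (fun i _ => if_neg (by omega))
  · exact sl_le K n hn hodd

end Stmt13Aux




/-- In characteristic zero, for odd `n ≥ 3`, the upper shift matrix `M = ∑ E_{i,i+1}` and
`N = E_{n,1}` generate `sl_n(K)`. -/
theorem stmt_13 {K : Type} [Field K] [CharZero K] (n : ℕ) (hn : 3 ≤ n) (hodd : Odd n) :
    LieSubalgebra.lieSpan K (Matrix (Fin n) (Fin n) K)
      {Matrix.of fun i j : Fin n => if (i : ℕ) + 1 = (j : ℕ) then (1 : K) else 0,
       Matrix.of fun i j : Fin n =>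
        if (i : ℕ) = n - 1 ∧ (j : ℕ) = 0 then (1 : K) else 0} =
      LieAlgebra.SpecialLinear.sl (Fin n) K := by
  exact Stmt13Aux.main_result K n hn hodd
end

section
/- Let K be a field of characteristic different from 2 and let n ≥ 4 be even. Then the matrices M = Σ_{i=1}^{n−1} E_{i,i+1} (the upper shift matrix) and N = E_{n1} do NOT generate the Lie algebra sl_n(K). -/
attribute [local instance 100] LieRing.ofAssociativeRing

open Matrix

section aux

variable {K : Type} [Field K] {n : ℕ}

lemma sum_ite_succ (k : Fin n) (f : Fin n → K) :
    (∑ m : Fin n, if (m : ℕ) + 1 = (k : ℕ) then f m else 0) =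
      if h : 1 ≤ (k : ℕ) then f ⟨(k : ℕ) - 1, by omega⟩ else 0 := by
  split_ifs with h
  · refine Finset.sum_eq_single_of_mem ⟨(k : ℕ) - 1, by have := k.isLt; omega⟩
      (Finset.mem_univ _) ?_ |>.trans (by simp; omega)
    intro m _ hm
    have : ¬ ((m : ℕ) + 1 = (k : ℕ)) := by
      intro hc
      exact hm (Fin.ext (by simp; omega))
    simp [this]
  · refine Finset.sum_eq_zero fun m _ => ?_
    have : ¬ ((m : ℕ) + 1 = (k : ℕ)) := by omega
    simp [this]

lemma sum_ite_last (hn : 0 < n) (f : Fin n → K) :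
    (∑ m : Fin n, if (m : ℕ) = n - 1 then f m else 0) = f ⟨n - 1, by omega⟩ := by
  refine Finset.sum_eq_single_of_mem ⟨n - 1, by omega⟩ (Finset.mem_univ _) ?_ |>.trans (by simp)
  intro m _ hm
  have : ¬ ((m : ℕ) = n - 1) := fun hc => hm (Fin.ext (by simpa using hc))
  simp [this]

end aux

/-- In characteristic ≠ 2, for even `n ≥ 4`, the upper shift matrix `M = ∑ E_{i,i+1}` and
`N = E_{n,1}` do not generate `sl_n(K)`. -/
theorem stmt_14 {K : Type} [Field K] (h2 : (2 : K) ≠ 0)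
    (n : ℕ) (hn : 4 ≤ n) (heven : Even n) :
    LieSubalgebra.lieSpan K (Matrix (Fin n) (Fin n) K)
      {Matrix.of fun i j : Fin n => if (i : ℕ) + 1 = (j : ℕ) then (1 : K) else 0,
       Matrix.of fun i j : Fin n =>
        if (i : ℕ) = n - 1 ∧ (j : ℕ) = 0 then (1 : K) else 0} ≠
      LieAlgebra.SpecialLinear.sl (Fin n) K := by
  intro heq
  haveI : NeZero n := ⟨by omega⟩
  set J : Matrix (Fin n) (Fin n) K :=
    Matrix.of (fun i j : Fin n => if (i : ℕ) + (j : ℕ) = n - 1 then (-1 : K) ^ (i : ℕ) else 0)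
    with hJ
  set M : Matrix (Fin n) (Fin n) K :=
    Matrix.of (fun i j : Fin n => if (i : ℕ) + 1 = (j : ℕ) then (1 : K) else 0) with hM
  set N : Matrix (Fin n) (Fin n) K :=
    Matrix.of (fun i j : Fin n => if (i : ℕ) = n - 1 ∧ (j : ℕ) = 0 then (1 : K) else 0) with hN
  have hMskew : M ∈ skewAdjointMatricesLieSubalgebra J := by
    rw [mem_skewAdjointMatricesLieSubalgebra, mem_skewAdjointMatricesSubmodule]
    show Mᵀ * J = J * (-M)
    ext k l
    rw [Matrix.mul_apply, Matrix.mul_apply]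
    simp only [hM, hJ, Matrix.transpose_apply, Matrix.neg_apply, Matrix.of_apply,
      ite_mul, mul_ite, one_mul, mul_one, zero_mul, mul_zero, mul_neg, neg_zero]
    have e1 : (∑ x : Fin n, if (x:ℕ) + (l:ℕ) = n - 1 then
          if (x:ℕ) + 1 = (k:ℕ) then (-1:K) ^ (x:ℕ) else 0 else 0)
        = ∑ x : Fin n, if (x:ℕ) + 1 = (k:ℕ) then
          (if (x:ℕ) + (l:ℕ) = n - 1 then (-1:K) ^ (x:ℕ) else 0) else 0 :=
      Finset.sum_congr rfl fun x _ => by split_ifs <;> rfl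
    have e2 : (∑ x : Fin n, -if (x:ℕ) + 1 = (l:ℕ) then
          (if (k:ℕ) + (x:ℕ) = n - 1 then (-1:K) ^ (k:ℕ) else 0) else 0)
        = -∑ x : Fin n, if (x:ℕ) + 1 = (l:ℕ) then
          (if (k:ℕ) + (x:ℕ) = n - 1 then (-1:K) ^ (k:ℕ) else 0) else 0 := by
      rw [← Finset.sum_neg_distrib]
    rw [e1, e2, sum_ite_succ, sum_ite_succ]
    have hk := k.isLt
    have hl := l.isLt
    simp only [Fin.val_mk]
    split_ifs with h1 h2 h3 h4 h5 h6 h7 h8 <;>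
      first
        | omega
        | (simp only [neg_zero]; done)
        | (have hkk : (k:ℕ) - 1 + 1 = (k:ℕ) := by omega
           have h5 : (-1:K) ^ ((k:ℕ)) = (-1:K) ^ ((k:ℕ) - 1) * (-1) := by
             rw [← pow_succ, hkk]
           rw [h5]; ring)
  have hNskew : N ∈ skewAdjointMatricesLieSubalgebra J := by
    rw [mem_skewAdjointMatricesLieSubalgebra, mem_skewAdjointMatricesSubmodule]
    show Nᵀ * J = J * (-N)
    ext k l
    rw [Matrix.mul_apply, Matrix.mul_apply]
    simp only [hN, hJ, Matrix.transpose_apply, Matrix.neg_apply, Matrix.of_apply,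
      ite_mul, mul_ite, one_mul, mul_one, zero_mul, mul_zero, mul_neg, neg_zero]
    have e1 : (∑ x : Fin n, if (x:ℕ) + (l:ℕ) = n - 1 then
          if (x:ℕ) = n - 1 ∧ (k:ℕ) = 0 then (-1:K) ^ (x:ℕ) else 0 else 0)
        = ∑ x : Fin n, if (x:ℕ) = n - 1 then
          (if (x:ℕ) + (l:ℕ) = n - 1 ∧ (k:ℕ) = 0 then (-1:K) ^ (x:ℕ) else 0) else 0 :=
      Finset.sum_congr rfl fun x _ => by
        split_ifs with a b c d <;> first | rfl | omega | tauto
    have e2 : (∑ x : Fin n, -if (x:ℕ) = n - 1 ∧ (l:ℕ) = 0 then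
          (if (k:ℕ) + (x:ℕ) = n - 1 then (-1:K) ^ (k:ℕ) else 0) else 0)
        = -∑ x : Fin n, if (x:ℕ) = n - 1 then
          (if (k:ℕ) + (x:ℕ) = n - 1 ∧ (l:ℕ) = 0 then (-1:K) ^ (k:ℕ) else 0) else 0 := by
      rw [← Finset.sum_neg_distrib]
      refine Finset.sum_congr rfl fun x _ => ?_
      congr 1
      split_ifs with a b c d <;> first | rfl | omega | tauto
    rw [e1, e2, sum_ite_last (by omega), sum_ite_last (by omega)]
    have hk := k.isLt
    have hl := l.isLt
    simp only [Fin.val_mk]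
    split_ifs with h1 h2 h3 <;>
      first
        | omega
        | (simp only [neg_zero]; done)
        | (obtain ⟨hx, hk0⟩ := h1
           obtain ⟨hy, hl0⟩ := h2
           rw [hk0]
           have : (-1:K) ^ (n - 1) = -1 := by
             obtain ⟨m, hm⟩ := heven
             have hodd : Odd (n - 1) := by
               refine ⟨m - 1, by omega⟩
             exact Odd.neg_one_pow hodd
           rw [this, pow_zero])
        | tauto
  -- E_{0,1} is in sl but not skew-adjoint
  have hle : LieSubalgebra.lieSpan K (Matrix (Fin n) (Fin n) K) {M, N} ≤
      skewAdjointMatricesLieSubalgebra J := by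
    rw [LieSubalgebra.lieSpan_le]
    intro X hX
    rcases hX with h | h
    · rw [h]; exact hMskew
    · rw [Set.mem_singleton_iff] at h; rw [h]; exact hNskew
  set E : Matrix (Fin n) (Fin n) K :=
    Matrix.single (⟨0, by omega⟩ : Fin n) (⟨1, by omega⟩ : Fin n) 1 with hE
  have hEsl : E ∈ LieAlgebra.SpecialLinear.sl (Fin n) K := by
    show E ∈ LinearMap.ker (Matrix.traceLinearMap (Fin n) K K)
    rw [LinearMap.mem_ker]
    show Matrix.trace E = 0
    rw [hE]
    refine Matrix.trace_single_eq_of_ne _ _ _ ?_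
    intro hc
    have := congrArg Fin.val hc
    simp at this
  have hEskew : E ∈ skewAdjointMatricesLieSubalgebra J := hle (heq ▸ hEsl)
  rw [mem_skewAdjointMatricesLieSubalgebra, mem_skewAdjointMatricesSubmodule] at hEskew
  replace hEskew : Eᵀ * J = J * (-E) := hEskew
  have key := congrFun (congrFun hEskew ⟨1, by omega⟩) ⟨n - 1, by omega⟩
  rw [Matrix.mul_apply, Matrix.mul_apply] at key
  have lhs : (∑ x : Fin n, Eᵀ (⟨1, by omega⟩ : Fin n) x * J x ⟨n - 1, by omega⟩) = 1 := by
    refine (Finset.sum_eq_single_of_mem (⟨0, by omega⟩ : Fin n)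
      (Finset.mem_univ _) ?_).trans ?_
    · intro m _ hm
      simp only [hE, Matrix.transpose_apply, Matrix.single, Matrix.of_apply]
      rw [if_neg, zero_mul]
      rintro ⟨hc, -⟩
      exact hm hc.symm
    · simp only [hE, hJ, Matrix.transpose_apply, Matrix.single, Matrix.of_apply]
      simp
  have rhs : (∑ x : Fin n, J (⟨1, by omega⟩ : Fin n) x * (-E) x ⟨n - 1, by omega⟩) = 0 := by
    refine Finset.sum_eq_zero fun x _ => ?_
    have hx : (-E) x ⟨n - 1, by omega⟩ = 0 := by
      simp only [hE, Matrix.neg_apply, Matrix.single, Matrix.of_apply]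
      rw [if_neg, neg_zero]
      rintro ⟨-, hc⟩
      have := congrArg Fin.val hc
      simp at this
      omega
    rw [hx, mul_zero]
  rw [lhs, rhs] at key
  exact one_ne_zero key
end

section
/- Let F_2 be the field with two elements. There does not exist a nilpotent 3×3 matrix Y over F_2 such that the matrix unit E_{12} and Y generate the Lie algebra sl_3(F_2). -/
attribute [local instance 100] LieRing.ofAssociativeRing

open Matrix

/-- helper: subtraction is commutative for matrices over `ZMod 2`. -/
private lemma subComm (M N : Matrix (Fin 3) (Fin 3) (ZMod 2)) : M - N = N - M := by
  ext i j
  simp only [Matrix.sub_apply]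
  revert i j
  have h : ∀ a b : ZMod 2, a - b = b - a := by decide
  intro i j; exact h _ _

/-- The Lie subalgebra of matrices `X` with `Xᵀ * B = B * X`. -/
def twistAlg (B : Matrix (Fin 3) (Fin 3) (ZMod 2)) :
    LieSubalgebra (ZMod 2) (Matrix (Fin 3) (Fin 3) (ZMod 2)) where
  carrier := {X | Xᵀ * B = B * X}
  add_mem' := by
    intro a b ha hb
    simp only [Set.mem_setOf_eq] at *
    rw [Matrix.transpose_add, add_mul, mul_add, ha, hb]
  zero_mem' := by simp
  smul_mem' := by
    intro c X hX
    simp only [Set.mem_setOf_eq] at *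
    rw [Matrix.transpose_smul, smul_mul_assoc, mul_smul_comm, hX]
  lie_mem' := by
    intro X Y hX hY
    simp only [Set.mem_setOf_eq] at *
    rw [Ring.lie_def, Matrix.transpose_sub, Matrix.transpose_mul, Matrix.transpose_mul,
      sub_mul, mul_assoc, mul_assoc, hX, hY, ← mul_assoc, ← mul_assoc, hX, hY,
      mul_assoc, mul_assoc, ← mul_sub]
    rw [subComm]

lemma mem_twistAlg {B X : Matrix (Fin 3) (Fin 3) (ZMod 2)} :
    X ∈ twistAlg B ↔ Xᵀ * B = B * X := Iff.rfl

lemma key (Y : Matrix (Fin 3) (Fin 3) (ZMod 2)) (h : Y ^ 3 = 0) :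
    Yᵀ * !![0,0,0;0,1,0;0,0,0] = !![0,0,0;0,1,0;0,0,0] * Y ∨
    Yᵀ * !![0,0,0;0,0,0;0,0,1] = !![0,0,0;0,0,0;0,0,1] * Y ∨
    Yᵀ * !![0,0,0;0,1,1;0,1,1] = !![0,0,0;0,1,1;0,1,1] * Y ∨
    Yᵀ * !![0,1,0;1,1,1;0,1,1] = !![0,1,0;1,1,1;0,1,1] * Y ∨
    Yᵀ * !![0,1,0;1,1,0;0,0,1] = !![0,1,0;1,1,0;0,0,1] * Y ∨
    Yᵀ * !![0,1,0;1,0,0;0,0,0] = !![0,1,0;1,0,0;0,0,0] * Y ∨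
    Yᵀ * !![0,1,0;1,0,0;0,0,1] = !![0,1,0;1,0,0;0,0,1] * Y ∨
    Yᵀ * !![0,1,0;1,0,1;0,1,0] = !![0,1,0;1,0,1;0,1,0] * Y ∨
    Yᵀ * !![0,1,0;1,0,1;0,1,1] = !![0,1,0;1,0,1;0,1,1] * Y := by
  revert h
  revert Y
  set_option maxRecDepth 100000 in decide

lemma main_aux (Y B Z : Matrix (Fin 3) (Fin 3) (ZMod 2))
    (hspan : LieSubalgebra.lieSpan (ZMod 2) (Matrix (Fin 3) (Fin 3) (ZMod 2))
        {Matrix.single (0 : Fin 3) (1 : Fin 3) (1 : ZMod 2), Y} =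
        LieAlgebra.SpecialLinear.sl (Fin 3) (ZMod 2))
    (he : (Matrix.single (0 : Fin 3) (1 : Fin 3) (1 : ZMod 2))ᵀ * B
        = B * Matrix.single (0 : Fin 3) (1 : Fin 3) (1 : ZMod 2))
    (hY : Yᵀ * B = B * Y)
    (hZtr : Matrix.trace Z = 0) (hZ : ¬ (Zᵀ * B = B * Z)) : False := by
  have hle : LieSubalgebra.lieSpan (ZMod 2) (Matrix (Fin 3) (Fin 3) (ZMod 2))
      {Matrix.single (0 : Fin 3) (1 : Fin 3) (1 : ZMod 2), Y} ≤ twistAlg B := by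
    rw [LieSubalgebra.lieSpan_le]
    intro X hX
    simp only [Set.mem_insert_iff, Set.mem_singleton_iff] at hX
    rcases hX with rfl | rfl
    · exact he
    · exact hY
  have hZsl : Z ∈ LieAlgebra.SpecialLinear.sl (Fin 3) (ZMod 2) := hZtr
  rw [← hspan] at hZsl
  exact hZ (hle hZsl)

/-- Over the field with two elements, there is no nilpotent `3 × 3` matrix `Y` such that
`E₁₂` and `Y` generate `sl₃(F₂)`. -/
theorem stmt_17 :
    ¬ ∃ Y : Matrix (Fin 3) (Fin 3) (ZMod 2), IsNilpotent Y ∧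
      LieSubalgebra.lieSpan (ZMod 2) (Matrix (Fin 3) (Fin 3) (ZMod 2))
        {Matrix.single (0 : Fin 3) (1 : Fin 3) (1 : ZMod 2), Y} =
        LieAlgebra.SpecialLinear.sl (Fin 3) (ZMod 2) := by
  rintro ⟨Y, hnil, hspan⟩
  have hY3 : Y ^ 3 = 0 := by
    have h := Matrix.isNilpotent_charpoly_sub_pow_of_isNilpotent hnil
    have h0 : Y.charpoly - Polynomial.X ^ (Fintype.card (Fin 3)) = 0 := h.eq_zero
    have hc : Y.charpoly = Polynomial.X ^ 3 := by
      have h1 := sub_eq_zero.mp h0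
      simpa using h1
    have h2 := Matrix.aeval_self_charpoly Y
    rw [hc] at h2
    simpa using h2
  rcases key Y hY3 with h | h | h | h | h | h | h | h | h
  · exact main_aux Y _ !![0,0,0;1,0,0;0,0,0] hspan (by decide) h (by decide) (by decide)
  · exact main_aux Y _ !![0,0,0;0,0,0;1,0,0] hspan (by decide) h (by decide) (by decide)
  · exact main_aux Y _ !![0,0,0;1,0,0;0,0,0] hspan (by decide) h (by decide) (by decide)
  · exact main_aux Y _ !![0,0,1;0,0,0;0,0,0] hspan (by decide) h (by decide) (by decide)
  · exact main_aux Y _ !![0,0,1;0,0,0;0,0,0] hspan (by decide) h (by decide) (by decide)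
  · exact main_aux Y _ !![0,0,1;0,0,0;0,0,0] hspan (by decide) h (by decide) (by decide)
  · exact main_aux Y _ !![0,0,1;0,0,0;0,0,0] hspan (by decide) h (by decide) (by decide)
  · exact main_aux Y _ !![0,0,1;0,0,0;0,0,0] hspan (by decide) h (by decide) (by decide)
  · exact main_aux Y _ !![0,0,1;0,0,0;0,0,0] hspan (by decide) h (by decide) (by decide)
end

section
/- Let K be a field, n ≥ 2, let T be a consistent diagonal n×n matrix over K, and let A be an n×n matrix over K all of whose off-diagonal entries are nonzero. Define A_1 = [T,A] and A_i = [T,A_{i−1}] for i = 2,…,n²−n, where [X,Y] = XY − YX. Then the matrices A_1,…,A_{n²−n} all have zero diagonal, are linearly independent, and form a basis of the space of n×n matrices over K with zero diagonal. -/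
lemma bracket_entry {K : Type} [Field K] {n : ℕ} (α : Fin n → K)
    (M : Matrix (Fin n) (Fin n) K) (i j : Fin n) :
    ⁅Matrix.diagonal α, M⁆ i j = (α i - α j) * M i j := by
  simp [Ring.lie_def, Matrix.sub_apply, sub_mul]
  ring

lemma iter_entry {K : Type} [Field K] {n : ℕ} (α : Fin n → K)
    (A : Matrix (Fin n) (Fin n) K) (k : ℕ) (i j : Fin n) :
    ((fun M => ⁅Matrix.diagonal α, M⁆)^[k] A) i j = (α i - α j) ^ k * A i j := by
  induction k generalizing i j with
  | zero => simp
  | succ k ih =>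
    rw [Function.iterate_succ_apply', bracket_entry, ih, pow_succ]
    ring

lemma card_offdiag (n : ℕ) :
    Fintype.card {p : Fin n × Fin n // p.1 ≠ p.2} = n ^ 2 - n := by
  have h1 : Fintype.card {p : Fin n × Fin n // p.1 = p.2} = n := by
    have e : {p : Fin n × Fin n // p.1 = p.2} ≃ Fin n :=
      ⟨fun p => p.1.1, fun i => ⟨(i, i), rfl⟩,
       fun p => by ext <;> simp [p.2.symm], fun i => rfl⟩
    simp [Fintype.card_congr e]
  have h2 := Fintype.card_subtype_compl (fun p : Fin n × Fin n => p.1 = p.2)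
  simp only [Fintype.card_prod, Fintype.card_fin, h1] at h2
  have h3 : Fintype.card {p : Fin n × Fin n // p.1 ≠ p.2}
      = Fintype.card {x : Fin n × Fin n // ¬ x.1 = x.2} :=
    Fintype.card_congr (Equiv.refl _)
  rw [h3, h2]; ring_nf

/-- If `T` is a consistent diagonal matrix and `A` has all off-diagonal entries nonzero,
then the iterated brackets `A₁ = [T,A]`, `Aᵢ = [T,Aᵢ₋₁]` for `i = 1, …, n² - n` all have
zero diagonal, are linearly independent, and form a basis of the space of matrices with
zero diagonal. -/
theorem stmt_18 {K : Type} [Field K] (n : ℕ) (hn : 2 ≤ n)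
    (α : Fin n → K) (hα : IsConsistent α)
    (A : Matrix (Fin n) (Fin n) K) (hoff : ∀ i j, i ≠ j → A i j ≠ 0)
    (f : Fin (n ^ 2 - n) → Matrix (Fin n) (Fin n) K)
    (hf : f = fun k : Fin (n ^ 2 - n) => (fun M => ⁅Matrix.diagonal α, M⁆)^[(k : ℕ) + 1] A) :
    (∀ k, ∀ i, f k i i = 0) ∧
    LinearIndependent K f ∧
    (Submodule.span K (Set.range f) : Set (Matrix (Fin n) (Fin n) K)) =
      {M | ∀ i, M i i = 0} := by

  obtain ⟨hsum, hne, hdist, hdiff⟩ := hα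
  have hfe : ∀ (k : Fin (n ^ 2 - n)) i j, f k i j = (α i - α j) ^ ((k : ℕ) + 1) * A i j := by
    intro k i j; rw [hf]; exact iter_entry α A _ i j
  -- the equivalence with off-diagonal pairs
  set S := {p : Fin n × Fin n // p.1 ≠ p.2} with hS
  let e : Fin (n ^ 2 - n) ≃ S := (Fintype.equivFinOfCardEq (card_offdiag n)).symm
  let g : Fin (n ^ 2 - n) → K := fun l => α (e l).1.1 - α (e l).1.2
  have hg0 : ∀ l, g l ≠ 0 := fun l => sub_ne_zero_of_ne (hdist _ _ (e l).2)
  have hginj : Function.Injective g := by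
    intro l l' h
    have := hdiff (e l).1.1 (e l).1.2 (e l').1.1 (e l').1.2 h
    rcases this with ⟨h1, _⟩ | ⟨h1, h2⟩
    · exact absurd h1 (e l).2
    · apply e.injective
      apply Subtype.ext
      exact Prod.ext h1 h2
  let d : Fin (n ^ 2 - n) → K := fun l => g l * A (e l).1.1 (e l).1.2
  have hd0 : ∀ l, d l ≠ 0 := fun l => mul_ne_zero (hg0 l) (hoff _ _ (e l).2)
  let V : Matrix (Fin (n ^ 2 - n)) (Fin (n ^ 2 - n)) K :=
    fun k l => g l ^ ((k : ℕ) + 1) * A (e l).1.1 (e l).1.2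
  have hV : V = (Matrix.vandermonde g).transpose * Matrix.diagonal d := by
    ext k l
    simp [V, Matrix.mul_diagonal, Matrix.vandermonde, d, pow_succ]
    ring
  have hVdet : V.det ≠ 0 := by
    rw [hV, Matrix.det_mul, Matrix.det_transpose, Matrix.det_diagonal]
    exact mul_ne_zero (Matrix.det_vandermonde_ne_zero_iff.2 hginj)
      (Finset.prod_ne_zero_iff.2 fun l _ => hd0 l)
  let E : Fin (n ^ 2 - n) → Matrix (Fin n) (Fin n) K :=
    fun l => Matrix.single (e l).1.1 (e l).1.2 1
  have hEentry : ∀ l i j, E l i j = if (e l).1.1 = i ∧ (e l).1.2 = j then 1 else 0 := by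
    intro l i j; simp [E, Matrix.single]
  have hfE : ∀ k, f k = ∑ l, V k l • E l := by
    intro k
    ext i j
    rw [hfe, Matrix.sum_apply]
    by_cases hij : i = j
    · subst hij
      rw [sub_self, zero_pow (Nat.succ_ne_zero _), zero_mul]
      refine (Finset.sum_eq_zero fun l _ => ?_).symm
      rw [Matrix.smul_apply, hEentry]
      have : ¬((e l).1.1 = i ∧ (e l).1.2 = i) := by
        rintro ⟨h1, h2⟩; exact (e l).2 (h1.trans h2.symm)
      rw [if_neg this, smul_zero]
    · have hij' : ((⟨(i, j), hij⟩ : S) : S) ∈ Set.univ := trivial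
      rw [Finset.sum_eq_single (e.symm ⟨(i, j), hij⟩)]
      · rw [Matrix.smul_apply, hEentry]
        simp [V, g, Equiv.apply_symm_apply]
      · intro l _ hl
        rw [Matrix.smul_apply, hEentry, if_neg, smul_zero]
        rintro ⟨h1, h2⟩
        apply hl
        rw [← Equiv.symm_apply_apply e l]
        congr 1
        exact Subtype.ext (Prod.ext h1 h2)
      · intro h; exact absurd (Finset.mem_univ _) h
  -- zero diagonal
  have hdiag : ∀ k, ∀ i, f k i i = 0 := by
    intro k i
    rw [hfe, sub_self, zero_pow (Nat.succ_ne_zero _), zero_mul]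
  refine ⟨hdiag, ?_, ?_⟩
  · -- linear independence
    rw [Fintype.linearIndependent_iff]
    intro c hc
    have hmv : V.transpose.mulVec c = 0 := by
      funext l
      have := congrFun (congrFun hc (e l).1.1) (e l).1.2
      simp only [Finset.sum_apply, Matrix.sum_apply, Matrix.smul_apply, Matrix.zero_apply] at this
      have h2 : ∀ k : Fin (n ^ 2 - n), c k • f k (e l).1.1 (e l).1.2 = V.transpose l k * c k := by
        intro k
        rw [hfe, smul_eq_mul]
        rw [Matrix.transpose_apply]; simp only [V, g]
        ring
      rw [Matrix.mulVec, dotProduct]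
      simp only [Pi.zero_apply]
      rw [← this]
      exact (Finset.sum_congr rfl fun k _ => (h2 k).symm)
    have := Matrix.eq_zero_of_mulVec_eq_zero (by rwa [Matrix.det_transpose]) hmv
    exact fun i => congrFun this i
  · -- span
    have hVunit : IsUnit V.det := isUnit_iff_ne_zero.2 hVdet
    have hEmem : ∀ l, E l ∈ Submodule.span K (Set.range f) := by
      intro l
      have key : E l = ∑ k, (V⁻¹ l k) • f k := by
        have : ∑ k, (V⁻¹ l k) • f k = ∑ j, ((V⁻¹ * V) l j) • E j := by
          rw [Finset.sum_congr rfl fun k (_ : k ∈ Finset.univ) => by rw [hfE k, Finset.smul_sum]]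
          rw [Finset.sum_comm]
          refine Finset.sum_congr rfl fun j _ => ?_
          rw [Matrix.mul_apply, Finset.sum_smul]
          exact Finset.sum_congr rfl fun k _ => by rw [smul_smul]
        rw [this, Matrix.nonsing_inv_mul V hVunit]
        rw [Finset.sum_eq_single l]
        · simp
        · intro j _ hj; rw [Matrix.one_apply_ne' hj, zero_smul]
        · intro h; exact absurd (Finset.mem_univ _) h
      rw [key]
      exact Submodule.sum_mem _ fun k _ =>
        Submodule.smul_mem _ _ (Submodule.subset_span ⟨k, rfl⟩)
    ext M
    simp only [SetLike.mem_coe, Set.mem_setOf_eq]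
    constructor
    · intro hM
      induction hM using Submodule.span_induction with
      | mem x hx => obtain ⟨k, rfl⟩ := hx; exact hdiag k
      | zero => intro i; rfl
      | add x y _ _ hx hy => intro i; rw [Matrix.add_apply, hx i, hy i, add_zero]
      | smul a x _ hx => intro i; rw [Matrix.smul_apply, hx i, smul_zero]
    · intro hM
      have hMsum : M = ∑ l, (M (e l).1.1 (e l).1.2) • E l := by
        ext i j
        rw [Matrix.sum_apply]
        by_cases hij : i = j
        · subst hij
          rw [hM i]
          refine (Finset.sum_eq_zero fun l _ => ?_).symm
          rw [Matrix.smul_apply, hEentry]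
          have : ¬((e l).1.1 = i ∧ (e l).1.2 = i) := by
            rintro ⟨h1, h2⟩; exact (e l).2 (h1.trans h2.symm)
          rw [if_neg this, smul_zero]
        · rw [Finset.sum_eq_single (e.symm ⟨(i, j), hij⟩)]
          · rw [Matrix.smul_apply, hEentry]
            simp [Equiv.apply_symm_apply]
          · intro l _ hl
            rw [Matrix.smul_apply, hEentry, if_neg, smul_zero]
            rintro ⟨h1, h2⟩
            apply hl
            rw [← Equiv.symm_apply_apply e l]
            congr 1
            exact Subtype.ext (Prod.ext h1 h2)
          · intro h; exact absurd (Finset.mem_univ _) h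
      rw [hMsum]
      exact Submodule.sum_mem _ fun l _ => Submodule.smul_mem _ _ (hEmem l)
end
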